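/- arXiv:2512.01065 — 7 statements merged into one kernel-verified Lean document; each statement's English description precedes it below -/
import Mathlib

section
/- If there exists an uncountable linear order which is 2-entangled and topologically separable, then the Open Graph Axiom (OGA) fails. -/
noncomputable section

open Set

/-- `L` is `m`-entangled: for every uncountable pairwise disjoint family of increasing
`m`-tuples from `L` and every type `t : m → {<,>}` (coded by `Bool`, `true` meaning `<`)
there are two distinct members realizing the type `t`. -/
def IsMEntangled (L : Type) [LinearOrder L] (m : ℕ) : Prop :=
  ∀ A : Set (Fin m → L), ¬ A.Countable →
    (∀ a ∈ A, StrictMono a) →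
    (∀ a ∈ A, ∀ b ∈ A, a ≠ b → ∀ i j, a i ≠ b j) →
    ∀ t : Fin m → Bool,
      ∃ a ∈ A, ∃ b ∈ A, a ≠ b ∧ ∀ i, if t i then a i < b i else b i < a i

/-- A linear order is topologically separable if some countable set meets every
nonempty open interval. -/
def TopSeparable (L : Type) [LinearOrder L] : Prop :=
  ∃ D : Set L, D.Countable ∧
    ∀ a b : L, (Set.Ioo a b).Nonempty → (D ∩ Set.Ioo a b).Nonempty

/-- A graph (given by its edge set `E`) is countably chromatic if the vertex set is a
countable union of independent sets. -/
def CountablyChromatic {X : Type} (E : Set (X × X)) : Prop :=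
  ∃ f : ℕ → Set X, (⋃ n, f n) = Set.univ ∧
    ∀ n, ∀ x ∈ f n, ∀ y ∈ f n, x ≠ y → (x, y) ∉ E

/-- A graph has an uncountable complete subgraph. -/
def HasUncountableClique {X : Type} (E : Set (X × X)) : Prop :=
  ∃ Y : Set X, ¬ Y.Countable ∧ ∀ x ∈ Y, ∀ y ∈ Y, x ≠ y → (x, y) ∈ E

/-- The Open Graph Axiom: for every separable metric space `X` and every open graph
`(X,E)`, either the graph is countably chromatic or it has an uncountable complete
subgraph. -/
def OGA : Prop :=
  ∀ (X : Type) [MetricSpace X],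
    TopologicalSpace.SeparableSpace X →
    ∀ E : Set (X × X),
      (∀ x : X, (x, x) ∉ E) →
      (∀ x y : X, (x, y) ∈ E → (y, x) ∈ E) →
      IsOpen E →
      CountablyChromatic E ∨ HasUncountableClique E

/- ### Auxiliary lemmas -/

/-- Zorn: maximal independent subsets exist. -/
lemma exists_maximal_indep {α : Type} (Z : Set α) (R : α → α → Prop) :
    ∃ K : Set α, K ⊆ Z ∧ (∀ x ∈ K, ∀ y ∈ K, x ≠ y → ¬ R x y) ∧
      ∀ z ∈ Z, z ∉ K → ∃ k ∈ K, k ≠ z ∧ (R z k ∨ R k z) := by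
  set S : Set (Set α) := {K | K ⊆ Z ∧ ∀ x ∈ K, ∀ y ∈ K, x ≠ y → ¬ R x y} with hS
  obtain ⟨K, hK⟩ := zorn_subset S (by
    intro c hcS hchain
    refine ⟨⋃₀ c, ⟨?_, ?_⟩, fun s hs => subset_sUnion_of_mem hs⟩
    · exact sUnion_subset fun s hs => (hcS hs).1
    · rintro x ⟨s, hs, hxs⟩ y ⟨u, hu, hyu⟩ hxy
      rcases hchain.total hs hu with hsu | hus
      · exact (hcS hu).2 x (hsu hxs) y hyu hxy
      · exact (hcS hs).2 x hxs y (hus hyu) hxy)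
  refine ⟨K, hK.1.1, hK.1.2, ?_⟩
  intro z hz hzK
  by_contra hno
  push_neg at hno
  have hins : insert z K ∈ S := by
    refine ⟨insert_subset hz hK.1.1, ?_⟩
    rintro x (rfl | hx) y (rfl | hy) hxy
    · exact absurd rfl hxy
    · intro hR; exact (hno y hy (fun h => hxy h.symm)).1 hR
    · intro hR; exact (hno x hx hxy).2 hR
    · exact hK.1.2 x hx y hy hxy
  exact hzK (hK.2 hins (subset_insert z K) (mem_insert z K))

lemma covBy_right_unique {L : Type} [LinearOrder L] {a b c : L}
    (h1 : a ⋖ b) (h2 : a ⋖ c) : b = c := by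
  rcases lt_trichotomy b c with h | h | h
  · exact absurd h (h2.2 h1.1)
  · exact h
  · exact absurd h (h1.2 h2.1)

lemma covBy_left_unique {L : Type} [LinearOrder L] {a b c : L}
    (h1 : a ⋖ c) (h2 : b ⋖ c) : a = b := by
  rcases lt_trichotomy a b with h | h | h
  · exact absurd h2.1 (h1.2 h)
  · exact h
  · exact absurd h1.1 (h2.2 h)

lemma strictMono_pair {L : Type} [LinearOrder L] {x y : L} (h : x < y) :
    StrictMono ![x, y] := by
  intro i j hij
  fin_cases i <;> fin_cases j <;> simp_all

/-- In a `2`-entangled linear order there are only countably many jumps. -/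
lemma jumps_countable {L : Type} [LinearOrder L] (ent : IsMEntangled L 2) :
    {x : L | ∃ y, x ⋖ y}.Countable := by
  classical
  set Z : Set L := {x : L | ∃ y, x ⋖ y} with hZdef
  by_contra hZ
  have hex : ∀ x ∈ Z, ∃ y, x ⋖ y := fun x hx => hx
  choose! s hs using hex
  obtain ⟨K, hKZ, hKind, hKmax⟩ := exists_maximal_indep Z (· ⋖ ·)
  have hKunc : ¬ K.Countable := by
    intro hKc
    apply hZ
    have hcover : Z ⊆ K ∪ ((⋃ k ∈ K, {z | z ⋖ k}) ∪ (⋃ k ∈ K, {z | k ⋖ z})) := by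
      intro z hz
      by_cases hzK : z ∈ K
      · exact Or.inl hzK
      · obtain ⟨k, hk, -, hR⟩ := hKmax z hz hzK
        rcases hR with hR | hR
        · exact Or.inr (Or.inl (mem_biUnion hk hR))
        · exact Or.inr (Or.inr (mem_biUnion hk hR))
    refine (Countable.mono hcover ?_)
    refine hKc.union (Countable.union ?_ ?_)
    · exact hKc.biUnion fun k _ =>
        Set.Subsingleton.countable (fun a ha b hb => covBy_left_unique ha hb)
    · exact hKc.biUnion fun k _ =>
        Set.Subsingleton.countable (fun a ha b hb => covBy_right_unique ha hb)
  set A : Set (Fin 2 → L) := (fun x => ![x, s x]) '' K with hAdef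
  have hAunc : ¬ A.Countable := by
    intro hAc
    apply hKunc
    have : K ⊆ (fun a : Fin 2 → L => a 0) '' A := by
      intro x hx
      exact ⟨![x, s x], ⟨x, hx, rfl⟩, by simp⟩
    exact Countable.mono this (hAc.image _)
  have hAmono : ∀ a ∈ A, StrictMono a := by
    rintro a ⟨x, hx, rfl⟩
    exact strictMono_pair (hs x (hKZ hx)).1
  have hAdisj : ∀ a ∈ A, ∀ b ∈ A, a ≠ b → ∀ i j, a i ≠ b j := by
    rintro a ⟨x, hx, rfl⟩ b ⟨y, hy, rfl⟩ hab i j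
    have hxy : x ≠ y := by
      rintro rfl; exact hab rfl
    fin_cases i <;> fin_cases j <;> simp
    · exact hxy
    · intro hxe
      exact hKind y hy x hx (fun h => hxy h.symm) (hxe ▸ hs y (hKZ hy))
    · intro hxe
      exact hKind x hx y hy hxy (hxe ▸ hs x (hKZ hx))
    · intro hxe
      exact hxy (covBy_left_unique (hxe ▸ hs x (hKZ hx)) (hs y (hKZ hy)))
  obtain ⟨a, ⟨x, hx, rfl⟩, b, ⟨y, hy, rfl⟩, hab, hrel⟩ :=
    ent A hAunc hAmono hAdisj ![true, false]
  have h0 := hrel 0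
  have h1 := hrel 1
  simp at h0 h1
  -- h0 : x < y, h1 : s y < s x
  have hy1 : y < s y := (hs y (hKZ hy)).1
  exact (hs x (hKZ hx)).2 h0 (hy1.trans h1)

/-- A countable order-separating set gives a strictly monotone map to `ℝ`. -/
lemma exists_strictMono_real {L : Type} [LinearOrder L] (D' : Set L) (hc : D'.Countable)
    (hsep : ∀ x y : L, x < y → ∃ d ∈ D', x ≤ d ∧ d ≤ y) :
    ∃ f : L → ℝ, StrictMono f := by
  classical
  rcases D'.eq_empty_or_nonempty with he | hne
  · refine ⟨fun _ => 0, fun x y hxy => ?_⟩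
    obtain ⟨d, hd, -⟩ := hsep x y hxy
    simp [he] at hd
  obtain ⟨d, hd⟩ := hc.exists_eq_range hne
  set g : L → ℕ → ℝ := fun x n =>
    (if d n ≤ x then ((1:ℝ)/2)^n else 0) + (if d n < x then ((1:ℝ)/2)^n else 0) with hgdef
  have hpow : ∀ n : ℕ, (0:ℝ) < ((1:ℝ)/2)^n := fun n => pow_pos (by norm_num) n
  have hnn : ∀ x n, 0 ≤ g x n := by
    intro x n
    have h := (hpow n).le
    simp only [hgdef]
    split_ifs <;> linarith
  have hle2 : ∀ x n, g x n ≤ 2 * ((1:ℝ)/2)^n := by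
    intro x n
    have h := (hpow n).le
    simp only [hgdef]
    split_ifs <;> linarith
  have hgsum : Summable (fun n => 2 * ((1:ℝ)/2)^n) :=
    (summable_geometric_of_lt_one (by norm_num) (by norm_num)).mul_left 2
  have hsum : ∀ x, Summable (g x) := fun x =>
    Summable.of_nonneg_of_le (hnn x) (hle2 x) hgsum
  refine ⟨fun x => ∑' n, g x n, ?_⟩
  intro x y hxy
  obtain ⟨dd, hdd, hxd, hdy⟩ := hsep x y hxy
  rw [hd] at hdd
  obtain ⟨n, rfl⟩ := hdd
  have hmono : ∀ m, g x m ≤ g y m := by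
    intro m
    simp only [hgdef]
    have h1 : (if d m ≤ x then ((1:ℝ)/2)^m else 0) ≤ (if d m ≤ y then ((1:ℝ)/2)^m else 0) := by
      split_ifs with ha hb
      · exact le_refl _
      · exact absurd (ha.trans hxy.le) hb
      · exact (hpow m).le
      · exact le_refl _
    have h2 : (if d m < x then ((1:ℝ)/2)^m else 0) ≤ (if d m < y then ((1:ℝ)/2)^m else 0) := by
      split_ifs with ha hb
      · exact le_refl _
      · exact absurd (ha.trans hxy) hb
      · exact (hpow m).le
      · exact le_refl _
    exact add_le_add h1 h2
  have hstrict : g x n < g y n := by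
    simp only [hgdef]
    have hnltx : ¬ d n < x := not_lt.2 hxd
    rcases eq_or_lt_of_le hdy with heq | hlt
    · have hnlex : ¬ d n ≤ x := not_le.2 (heq.symm ▸ hxy)
      have hnlty : ¬ d n < y := not_lt.2 (le_of_eq heq.symm)
      rw [if_neg hnlex, if_neg hnltx, if_pos hdy, if_neg hnlty]
      simpa using hpow n
    · rw [if_neg hnltx, if_pos hdy, if_pos hlt]
      split_ifs with hcase
      · linarith [hpow n]
      · linarith [hpow n]
  exact Summable.tsum_lt_tsum hmono hstrict (hsum x) (hsum y)

/-- An uncountable linear order has an uncountable pairwise disjoint family of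
increasing pairs. -/
lemma exists_disjoint_family (L : Type) [LinearOrder L] [Uncountable L] :
    ∃ K : Set (Fin 2 → L), ¬ K.Countable ∧ (∀ a ∈ K, StrictMono a) ∧
      (∀ a ∈ K, ∀ b ∈ K, a ≠ b → ∀ i j, a i ≠ b j) := by
  classical
  obtain ⟨K, hKZ, hKind, hKmax⟩ :=
    exists_maximal_indep {a : Fin 2 → L | StrictMono a} (fun a b => ∃ i j, a i = b j)
  refine ⟨K, ?_, fun a ha => hKZ ha, fun a ha b hb hne i j hij =>
    hKind a ha b hb hne ⟨i, j, hij⟩⟩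
  intro hKc
  set C : Set L := ⋃ a ∈ K, Set.range a with hC
  have hCc : C.Countable := hKc.biUnion fun a _ => (Set.finite_range a).countable
  have hcompl : ¬ (Cᶜ : Set L).Countable := by
    intro hcc
    have huniv : (Set.univ : Set L) = C ∪ Cᶜ := by simp
    exact Set.not_countable_univ (huniv ▸ hCc.union hcc)
  have key : ∀ u v : L, u ∈ Cᶜ → v ∈ Cᶜ → u < v → False := by
    intro u v hu hv hlt
    have hzC : ∀ i : Fin 2, (![u, v] : Fin 2 → L) i ∉ C := by
      intro i
      fin_cases i
      · simpa using hu
      · simpa using hv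
    have hzZ : StrictMono (![u, v] : Fin 2 → L) := strictMono_pair hlt
    have hzK : (![u, v] : Fin 2 → L) ∉ K := by
      intro hz
      exact hzC 0 (Set.mem_biUnion hz ⟨0, rfl⟩)
    obtain ⟨k, hk, -, hR⟩ := hKmax _ hzZ hzK
    rcases hR with ⟨i, j, hij⟩ | ⟨i, j, hij⟩
    · exact hzC i (hij ▸ Set.mem_biUnion hk ⟨j, rfl⟩)
    · exact hzC j (hij ▸ Set.mem_biUnion hk ⟨i, rfl⟩)
  obtain ⟨u, hu, v, hv, huv⟩ :=
    Set.not_subsingleton_iff.1 (fun hsub => hcompl hsub.countable)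
  rcases huv.lt_or_gt with hlt | hlt
  · exact key u v hu hv hlt
  · exact key v u hv hu hlt

/-- If there is an uncountable `2`-entangled topologically separable linear order,
then the Open Graph Axiom fails. -/
theorem oga_fails_of_entangled_separable
    (h : ∃ (L : Type) (inst : LinearOrder L), Uncountable L ∧
      @IsMEntangled L inst 2 ∧ @TopSeparable L inst) :
    ¬ OGA := by
  classical
  intro hOGA
  obtain ⟨L, inst, hunc, ent, sep⟩ := h
  letI := inst
  haveI := hunc
  obtain ⟨D, hDc, hD⟩ := sep
  have hJ : {x : L | ∃ y, x ⋖ y}.Countable := jumps_countable ent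
  have hsep : ∀ x y : L, x < y → ∃ d ∈ D ∪ {x : L | ∃ y, x ⋖ y}, x ≤ d ∧ d ≤ y := by
    intro x y hxy
    rcases (Set.Ioo x y).eq_empty_or_nonempty with he | hne
    · refine ⟨x, Or.inr ⟨y, hxy, fun c hc hc' => ?_⟩, le_refl x, hxy.le⟩
      exact (Set.eq_empty_iff_forall_notMem.1 he c) ⟨hc, hc'⟩
    · obtain ⟨dd, hdd1, hdd2⟩ := hD x y hne
      exact ⟨dd, Or.inl hdd1, hdd2.1.le, hdd2.2.le⟩
  obtain ⟨f, hf⟩ := exists_strictMono_real _ (hDc.union hJ) hsep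
  obtain ⟨K, hKunc, hKmono, hKdisj⟩ := exists_disjoint_family L
  set g : (Fin 2 → L) → ℝ × ℝ := fun a => (f (a 0), f (a 1)) with hg
  have hginj : ∀ a ∈ K, ∀ b ∈ K, g a = g b → a = b := by
    intro a ha b hb hab
    by_contra hne
    exact hKdisj a ha b hb hne 0 0 (hf.injective (congrArg Prod.fst hab))
  set T : Set (ℝ × ℝ) := g '' K with hT
  have hTunc : ¬ T.Countable := fun hTc =>
    hKunc (countable_of_injective_of_countable_image
      (fun a ha b hb => hginj a ha b hb) hTc)
  set E : Set (↥T × ↥T) := {pq |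
      ((pq.1 : ℝ × ℝ).1 < (pq.2 : ℝ × ℝ).1 ∧ (pq.2 : ℝ × ℝ).2 < (pq.1 : ℝ × ℝ).2)
    ∨ ((pq.2 : ℝ × ℝ).1 < (pq.1 : ℝ × ℝ).1 ∧ (pq.1 : ℝ × ℝ).2 < (pq.2 : ℝ × ℝ).2)} with hE
  have c1 : Continuous (fun pq : ↥T × ↥T => (pq.1 : ℝ × ℝ).1) :=
    (continuous_subtype_val.comp continuous_fst).fst
  have c2 : Continuous (fun pq : ↥T × ↥T => (pq.1 : ℝ × ℝ).2) :=
    (continuous_subtype_val.comp continuous_fst).snd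
  have c3 : Continuous (fun pq : ↥T × ↥T => (pq.2 : ℝ × ℝ).1) :=
    (continuous_subtype_val.comp continuous_snd).fst
  have c4 : Continuous (fun pq : ↥T × ↥T => (pq.2 : ℝ × ℝ).2) :=
    (continuous_subtype_val.comp continuous_snd).snd
  have hopen : IsOpen E :=
    ((isOpen_lt c1 c3).inter (isOpen_lt c4 c2)).union
      ((isOpen_lt c3 c1).inter (isOpen_lt c2 c4))
  have hirr : ∀ x : ↥T, (x, x) ∉ E := by
    intro x hx
    simp only [hE, Set.mem_setOf_eq] at hx
    rcases hx with ⟨h, -⟩ | ⟨h, -⟩ <;> exact lt_irrefl _ h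
  have hsymm : ∀ x y : ↥T, (x, y) ∈ E → (y, x) ∈ E := by
    intro x y hxy
    simp only [hE, Set.mem_setOf_eq] at hxy ⊢
    tauto
  have key : ∀ W : Set (ℝ × ℝ), ¬ W.Countable → W ⊆ T → ∀ t : Fin 2 → Bool,
      ∃ a b : Fin 2 → L, g a ∈ W ∧ g b ∈ W ∧ g a ≠ g b ∧
        (∀ i, if t i then a i < b i else b i < a i) := by
    intro W hWunc hWT t
    set A : Set (Fin 2 → L) := {a ∈ K | g a ∈ W} with hA
    have hAunc : ¬ A.Countable := by
      intro hAc
      apply hWunc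
      have hsub : W ⊆ g '' A := by
        intro w hw
        obtain ⟨a, ha, rfl⟩ := hWT hw
        exact ⟨a, ⟨ha, hw⟩, rfl⟩
      exact (hAc.image g).mono hsub
    obtain ⟨a, ha, b, hb, hne, hrel⟩ := ent A hAunc (fun a ha => hKmono a ha.1)
      (fun a ha b hb hne => hKdisj a ha.1 b hb.1 hne) t
    exact ⟨a, b, ha.2, hb.2, fun hgab => hne (hginj a ha.1 b hb.1 hgab), hrel⟩
  rcases hOGA ↥T inferInstance E hirr hsymm hopen with ⟨cl, hcover, hind⟩ | ⟨Y, hYunc, hYcl⟩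
  · have hXunc : ¬ (Set.univ : Set ↥T).Countable := by
      rw [Set.countable_univ_iff, Set.countable_coe_iff]
      exact hTunc
    have hexn : ∃ n, ¬ (cl n).Countable := by
      by_contra hall
      push_neg at hall
      exact hXunc (hcover ▸ Set.countable_iUnion hall)
    obtain ⟨n, hn⟩ := hexn
    have hWunc : ¬ (Subtype.val '' cl n : Set (ℝ × ℝ)).Countable := by
      intro hc
      exact hn ((hc.preimage Subtype.val_injective).mono
        (Set.subset_preimage_image _ _))
    obtain ⟨a, b, haW, hbW, hgne, hrel⟩ :=
      key _ hWunc (by rintro w ⟨p, -, rfl⟩; exact p.2) ![true, false]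
    obtain ⟨p, hp, hpe⟩ := haW
    obtain ⟨q, hq, hqe⟩ := hbW
    have hpq : p ≠ q := fun hh => hgne (by rw [← hpe, ← hqe, hh])
    apply hind n p hp q hq hpq
    have h0 := hrel 0
    have h1 := hrel 1
    simp at h0 h1
    simp only [hE, Set.mem_setOf_eq, hpe, hqe, hg]
    exact Or.inl ⟨hf h0, hf h1⟩
  · have hWunc : ¬ (Subtype.val '' Y : Set (ℝ × ℝ)).Countable := by
      intro hc
      exact hYunc ((hc.preimage Subtype.val_injective).mono
        (Set.subset_preimage_image _ _))
    obtain ⟨a, b, haW, hbW, hgne, hrel⟩ :=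
      key _ hWunc (by rintro w ⟨p, -, rfl⟩; exact p.2) ![true, true]
    obtain ⟨p, hp, hpe⟩ := haW
    obtain ⟨q, hq, hqe⟩ := hbW
    have hpq : p ≠ q := fun hh => hgne (by rw [← hpe, ← hqe, hh])
    have hedge := hYcl p hp q hq hpq
    have h0 := hrel 0
    have h1 := hrel 1
    simp at h0 h1
    simp only [hE, Set.mem_setOf_eq, hpe, hqe, hg] at hedge
    rcases hedge with ⟨-, hlt⟩ | ⟨hlt, -⟩
    · exact absurd (hf h1) (lt_asymm hlt)
    · exact absurd (hf h0) (lt_asymm hlt)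

end
end

section
/- Let (T,<_T,<_lex) be a lexicographically ordered Aronszajn tree. The following are equivalent: (a) (T,<_T,<_lex) is weakly bi-entangled; (b) for every normal family B ⊆ [T]² and every type t : 2 → {<,>} there are a,b ∈ B with ht(a) < ht(b) and tp⊥(a,b) = t; (c) for every uncountable pairwise disjoint separated family A ⊆ [T]² and every type t : 2 → {<,>} there are a,b ∈ A with max(ht(a(0)),ht(a(1))) < min(ht(b(0)),ht(b(1))) and tp⊥(a,b) = t. -/
/-!
(a) ⇒ (c): an uncountable pairwise disjoint family has members above every countable level.
(c) ⇒ (b): all pairs of a normal family split below a countable level `ν`; by pigeonhole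
uncountably many share the restriction `v` of their right node to `ν`, and `v` separates them.
(b) ⇒ (a): if a separated family `A` is a counterexample, every `ξ < ω₁` has a pair `b ξ ∈ A`
above `ξ` and a type `tp ξ` realized with it by no pair of `A` below `ξ`. Using closure points
of `ξ ↦ ht (b ξ)`, select `s η ≥ η` with `tp (s η)` constant such that `s η < s θ` puts
`b (s η)` entirely below `s θ`. The separator makes the pairs of `A` split below its height, so
the restrictions of `b (s η)` to level `η` form a normal family. In a pair of it of that type,
`s η = s θ` would make the left nodes comparable, so `b (s η)` realizes the type with `b (s θ)`.
-/

noncomputable section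

open Set

/-- The ordinal `ω₁`. -/
def omega1 : Ordinal := (Cardinal.aleph 1).ord

/-- A set-theoretic tree: a partial order in which the set of predecessors of every
node is well-ordered by the order. -/
def IsSetTree (T : Type) [PartialOrder T] : Prop :=
  ∀ t : T, IsWellOrder {s : T // s < t} (fun a b => (a : T) < (b : T))

/-- The height of a node: the order type of its set of predecessors. -/
noncomputable def nodeHt {T : Type} [PartialOrder T] (hT : IsSetTree T) (t : T) : Ordinal :=
  @Ordinal.type {s : T // s < t} (fun a b => (a : T) < (b : T)) (hT t)

-- `restr hT t ξ` is the unique `s ≤ t` of height `ξ` (junk value `t` if there is none).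
open Classical in
noncomputable def restr {T : Type} [PartialOrder T] (hT : IsSetTree T) (t : T) (ξ : Ordinal) : T :=
  if h : ∃ s : T, s ≤ t ∧ nodeHt hT s = ξ then h.choose else t

/-- Incomparability in the tree order. -/
def Incomp {T : Type} [PartialOrder T] (s t : T) : Prop := ¬ s ≤ t ∧ ¬ t ≤ s

/-- `Δ(s,t)`: the least `α` such that `s↾α ≠ t↾α`. -/
noncomputable def delta {T : Type} [PartialOrder T] (hT : IsSetTree T) (s t : T) : Ordinal :=
  sInf {α : Ordinal | restr hT s α ≠ restr hT t α}

/-- A family of linear orders on the levels of the tree, coded as a single relation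
relating only nodes of the same height. -/
def IsLevelOrderFamily {T : Type} [PartialOrder T] (hT : IsSetTree T) (lo : T → T → Prop) : Prop :=
  (∀ s t, lo s t → nodeHt hT s = nodeHt hT t) ∧
  (∀ t, ¬ lo t t) ∧
  (∀ s t u, lo s t → lo t u → lo s u) ∧
  (∀ s t, s ≠ t → nodeHt hT s = nodeHt hT t → lo s t ∨ lo t s)

/-- The lexicographic ordering induced by the level orders `lo`:
`t <lex s` iff `t <_T s`, or `t ⊥ s` and `t↾Δ(t,s) ◁ s↾Δ(t,s)`. -/
def lexLT {T : Type} [PartialOrder T] (hT : IsSetTree T) (lo : T → T → Prop) (t s : T) : Prop :=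
  t < s ∨ (Incomp t s ∧ lo (restr hT t (delta hT t s)) (restr hT s (delta hT t s)))

/-- An `ω₁`-tree: height `ω₁` and all levels countable. -/
def IsOmega1Tree {T : Type} [PartialOrder T] (hT : IsSetTree T) : Prop :=
  (∀ t : T, nodeHt hT t < omega1) ∧
  (∀ α : Ordinal, α < omega1 → ∃ t : T, nodeHt hT t = α) ∧
  (∀ α : Ordinal, {t : T | nodeHt hT t = α}.Countable)

def NoUncountableChain (T : Type) [PartialOrder T] : Prop :=
  ∀ C : Set T, IsChain (· ≤ ·) C → C.Countable

def NoUncountableAntichain (T : Type) [PartialOrder T] : Prop :=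
  ∀ A : Set T, (∀ s ∈ A, ∀ t ∈ A, s ≠ t → Incomp s t) → A.Countable

/-- An Aronszajn tree: an `ω₁`-tree with no uncountable chains. -/
def IsAronszajnTree {T : Type} [PartialOrder T] (hT : IsSetTree T) : Prop :=
  IsOmega1Tree hT ∧ NoUncountableChain T

/-- A Suslin tree: an `ω₁`-tree with no uncountable chains and no uncountable antichains. -/
def IsSuslinTree {T : Type} [PartialOrder T] (hT : IsSetTree T) : Prop :=
  IsOmega1Tree hT ∧ NoUncountableChain T ∧ NoUncountableAntichain T

/-- A family of pairs is pairwise disjoint if distinct members are disjoint as sets. -/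
def PairwiseDisjointPairs {T : Type} (A : Set (T × T)) : Prop :=
  ∀ a ∈ A, ∀ b ∈ A, a ≠ b → a.1 ≠ b.1 ∧ a.1 ≠ b.2 ∧ a.2 ≠ b.1 ∧ a.2 ≠ b.2

/-- A family of pairs is separated if some `c` lies strictly between the coordinates
of every member. -/
def SeparatedPairs {T : Type} (lt : T → T → Prop) (A : Set (T × T)) : Prop :=
  ∃ c : T, ∀ a ∈ A, lt a.1 c ∧ lt c a.2

/-- `tpPerp hT lo a b t`: the pair `(a,b)` realizes the type `t` in the lexicographic
order and moreover `a i ⊥ b i` in the tree order, for `i < 2`. (`true` codes `<`.) -/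
def tpPerp {T : Type} [PartialOrder T] (hT : IsSetTree T) (lo : T → T → Prop)
    (a b : T × T) (t : Fin 2 → Bool) : Prop :=
  Incomp a.1 b.1 ∧ Incomp a.2 b.2 ∧
  (if t 0 then lexLT hT lo a.1 b.1 else lexLT hT lo b.1 a.1) ∧
  (if t 1 then lexLT hT lo a.2 b.2 else lexLT hT lo b.2 a.2)

/-- The weakly bi-entangled property of a lexicographically ordered tree. -/
def WeaklyBiEntangled {T : Type} [PartialOrder T] (hT : IsSetTree T) (lo : T → T → Prop) : Prop :=
  ∀ A : Set (T × T), ¬ A.Countable →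
    (∀ a ∈ A, lexLT hT lo a.1 a.2) →
    PairwiseDisjointPairs A → SeparatedPairs (lexLT hT lo) A →
    ∃ ξ₀ : Ordinal, ξ₀ < omega1 ∧
      ∀ b ∈ A, ξ₀ ≤ nodeHt hT b.1 → ξ₀ ≤ nodeHt hT b.2 →
        ∀ t : Fin 2 → Bool,
          ∃ a ∈ A, nodeHt hT a.1 < ξ₀ ∧ nodeHt hT a.2 < ξ₀ ∧ tpPerp hT lo a b t

/-- A normal family of pairs. -/
def NormalFamily {T : Type} [PartialOrder T] (hT : IsSetTree T) (lo : T → T → Prop)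
    (B : Set (T × T)) : Prop :=
  ¬ B.Countable ∧
  (∀ b ∈ B, lexLT hT lo b.1 b.2) ∧
  PairwiseDisjointPairs B ∧
  (∀ b ∈ B, nodeHt hT b.1 = nodeHt hT b.2) ∧
  BddAbove {α : Ordinal | ∃ b ∈ B, α = delta hT b.1 b.2} ∧
  sSup {α : Ordinal | ∃ b ∈ B, α = delta hT b.1 b.2} <
    sInf {α : Ordinal | ∃ b ∈ B, α = nodeHt hT b.1} ∧
  {α : Ordinal | ∃ b ∈ B, α = nodeHt hT b.1} =
    {α : Ordinal | sInf {α : Ordinal | ∃ b ∈ B, α = nodeHt hT b.1} ≤ α ∧ α < omega1}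

section Tree

variable {T : Type} [PartialOrder T] (hT : IsSetTree T)

theorem nodeHt_eq_typein {s t : T} (h : s < t) :
    nodeHt hT s =
      @Ordinal.typein {u : T // u < t} (fun a b => (a : T) < (b : T)) (hT t) ⟨s, h⟩ := by
  have := hT t
  rw [← @Ordinal.type_subrel _ _ (hT t) ⟨s, h⟩]
  refine (@Ordinal.type_eq _ _ _ _ (hT s) _).2 ⟨?_⟩
  exact ⟨⟨fun u => ⟨⟨u.1, u.2.trans h⟩, u.2⟩, fun u => ⟨u.1.1, u.2⟩, fun _ => rfl, fun _ => rfl⟩,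
    Iff.rfl⟩

theorem nodeHt_lt_nodeHt {s t : T} (h : s < t) : nodeHt hT s < nodeHt hT t := by
  rw [nodeHt_eq_typein hT h]
  exact @Ordinal.typein_lt_type _ _ (hT t) _

theorem nodeHt_le_nodeHt {s t : T} (h : s ≤ t) : nodeHt hT s ≤ nodeHt hT t := by
  rcases h.eq_or_lt with rfl | h
  · exact le_rfl
  · exact (nodeHt_lt_nodeHt hT h).le

theorem exists_lt_nodeHt_eq {t : T} {ξ : Ordinal} (h : ξ < nodeHt hT t) :
    ∃ s < t, nodeHt hT s = ξ := by
  have := hT t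
  obtain ⟨⟨s, hs⟩, rfl⟩ :=
    Ordinal.typein_surj (fun a b : {u : T // u < t} => (a : T) < (b : T)) h
  exact ⟨s, hs, nodeHt_eq_typein hT hs⟩

include hT in
theorem le_total_of_le {u v t : T} (hu : u ≤ t) (hv : v ≤ t) : u ≤ v ∨ v ≤ u := by
  rcases hu.eq_or_lt with rfl | hu
  · exact Or.inr hv
  rcases hv.eq_or_lt with rfl | hv
  · exact Or.inl hu.le
  have := hT t
  rcases trichotomous_of (fun a b : {s : T // s < t} => (a : T) < (b : T)) ⟨u, hu⟩ ⟨v, hv⟩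
    with h | h | h
  · exact Or.inl h.le
  · exact Or.inl (congrArg Subtype.val h).le
  · exact Or.inr h.le

theorem eq_of_le_of_nodeHt_eq {s t : T} (hst : s ≤ t) (h : nodeHt hT s = nodeHt hT t) :
    s = t :=
  hst.eq_of_not_lt fun hlt => (nodeHt_lt_nodeHt hT hlt).ne h

theorem eq_of_nodeHt_eq_of_le {s₁ s₂ t : T} (h₁ : s₁ ≤ t) (h₂ : s₂ ≤ t)
    (h : nodeHt hT s₁ = nodeHt hT s₂) : s₁ = s₂ := by
  rcases le_total_of_le hT h₁ h₂ with h' | h'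
  · exact eq_of_le_of_nodeHt_eq hT h' h
  · exact (eq_of_le_of_nodeHt_eq hT h' h.symm).symm

theorem incomp_of_ne_of_nodeHt_eq {s t : T} (hne : s ≠ t) (h : nodeHt hT s = nodeHt hT t) :
    Incomp s t :=
  ⟨fun hst => hne (eq_of_le_of_nodeHt_eq hT hst h),
    fun hts => hne (eq_of_le_of_nodeHt_eq hT hts h.symm).symm⟩

theorem restr_le (t : T) (ξ : Ordinal) : restr hT t ξ ≤ t := by
  unfold restr
  split
  · next h => exact h.choose_spec.1
  · exact le_rfl

theorem nodeHt_restr {t : T} {ξ : Ordinal} (h : ξ ≤ nodeHt hT t) :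
    nodeHt hT (restr hT t ξ) = ξ := by
  have hex : ∃ s : T, s ≤ t ∧ nodeHt hT s = ξ := by
    rcases h.eq_or_lt with rfl | h
    · exact ⟨t, le_rfl, rfl⟩
    · obtain ⟨s, hs, hsξ⟩ := exists_lt_nodeHt_eq hT h
      exact ⟨s, hs.le, hsξ⟩
  rw [restr, dif_pos hex]
  exact hex.choose_spec.2

theorem restr_eq_of_le {s t : T} {ξ : Ordinal} (h : s ≤ t) (hs : nodeHt hT s = ξ) :
    restr hT t ξ = s :=
  eq_of_nodeHt_eq_of_le hT (restr_le hT t ξ) h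
    ((nodeHt_restr hT (hs ▸ nodeHt_le_nodeHt hT h)).trans hs.symm)

theorem restr_eq_restr {s t : T} {ξ : Ordinal} (h : s ≤ t) (hξ : ξ ≤ nodeHt hT s) :
    restr hT s ξ = restr hT t ξ :=
  (restr_eq_of_le hT ((restr_le hT s ξ).trans h) (nodeHt_restr hT hξ)).symm

theorem restr_mono {t : T} {ξ ζ : Ordinal} (h : ξ ≤ ζ) (hζ : ζ ≤ nodeHt hT t) :
    restr hT t ξ ≤ restr hT t ζ := by
  rw [← restr_eq_restr hT (restr_le hT t ζ) ((nodeHt_restr hT hζ).symm ▸ h)]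
  exact restr_le hT _ _

theorem restr_lt {t : T} {ξ : Ordinal} (h : ξ < nodeHt hT t) : restr hT t ξ < t :=
  (restr_le hT t ξ).lt_of_ne fun heq => h.ne (by rw [← heq, nodeHt_restr hT h.le])

end Tree

section Delta

variable {T : Type} [PartialOrder T] (hT : IsSetTree T)

theorem Incomp.symm {s t : T} (h : Incomp s t) : Incomp t s := ⟨h.2, h.1⟩

include hT in
theorem Incomp.of_le {s t σ τ : T} (h : Incomp s t) (hs : s ≤ σ) (ht : t ≤ τ) :
    Incomp σ τ := by
  refine ⟨fun hστ => ?_, fun hτσ => ?_⟩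
  · rcases le_total_of_le hT (hs.trans hστ) ht with h' | h'
    exacts [h.1 h', h.2 h']
  · rcases le_total_of_le hT (ht.trans hτσ) hs with h' | h'
    exacts [h.2 h', h.1 h']

theorem delta_comm (s t : T) : delta hT s t = delta hT t s := by
  simp only [delta, ne_comm]

theorem delta_le_of_restr_ne {s t : T} {α : Ordinal} (h : restr hT s α ≠ restr hT t α) :
    delta hT s t ≤ α :=
  csInf_le' h

theorem restr_eq_of_lt_delta {s t : T} {α : Ordinal} (h : α < delta hT s t) :
    restr hT s α = restr hT t α :=
  not_not.1 fun hne => (delta_le_of_restr_ne hT hne).not_gt h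

theorem restr_nodeHt_ne_of_not_le {s t : T} (h : ¬ s ≤ t) :
    restr hT s (nodeHt hT s) ≠ restr hT t (nodeHt hT s) := by
  rw [restr_eq_of_le hT le_rfl rfl]
  exact fun hst => h (hst ▸ restr_le hT t _)

theorem restr_delta_ne {s t : T} (h : Incomp s t) :
    restr hT s (delta hT s t) ≠ restr hT t (delta hT s t) :=
  csInf_mem (s := {α | restr hT s α ≠ restr hT t α})
    ⟨nodeHt hT s, restr_nodeHt_ne_of_not_le hT h.1⟩

theorem delta_le_nodeHt_left {s t : T} (h : Incomp s t) : delta hT s t ≤ nodeHt hT s :=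
  delta_le_of_restr_ne hT (restr_nodeHt_ne_of_not_le hT h.1)

theorem delta_le_nodeHt_right {s t : T} (h : Incomp s t) : delta hT s t ≤ nodeHt hT t :=
  delta_comm hT s t ▸ delta_le_nodeHt_left hT h.symm

theorem incomp_of_restr_ne {s t : T} {ξ : Ordinal} (hs : ξ ≤ nodeHt hT s)
    (ht : ξ ≤ nodeHt hT t) (h : restr hT s ξ ≠ restr hT t ξ) : Incomp s t :=
  ⟨fun hst => h (restr_eq_restr hT hst hs), fun hts => h (restr_eq_restr hT hts ht).symm⟩

theorem Incomp.of_le_of_delta_le {s t s' t' : T} (h : Incomp s t) (hs : s' ≤ s) (ht : t' ≤ t)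
    (hs' : delta hT s t ≤ nodeHt hT s') (ht' : delta hT s t ≤ nodeHt hT t') : Incomp s' t' := by
  refine incomp_of_restr_ne hT hs' ht' ?_
  rw [restr_eq_restr hT hs hs', restr_eq_restr hT ht ht']
  exact restr_delta_ne hT h

theorem delta_eq_of_le {s t σ τ : T} (h : Incomp s t) (hs : s ≤ σ) (ht : t ≤ τ) :
    delta hT σ τ = delta hT s t := by
  have hδs := delta_le_nodeHt_left hT h
  have hδt := delta_le_nodeHt_right hT h
  refine le_antisymm (delta_le_of_restr_ne hT ?_) (not_lt.1 fun hlt => ?_)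
  · rw [← restr_eq_restr hT hs hδs, ← restr_eq_restr hT ht hδt]
    exact restr_delta_ne hT h
  · apply restr_delta_ne hT (h.of_le hT hs ht)
    rw [← restr_eq_restr hT hs (hlt.le.trans hδs), ← restr_eq_restr hT ht (hlt.le.trans hδt)]
    exact restr_eq_of_lt_delta hT hlt

end Delta

section Lex

variable {T : Type} [PartialOrder T] (hT : IsSetTree T) {lo : T → T → Prop}

theorem lexLT_iff_of_incomp {s t : T} (h : Incomp s t) :
    lexLT hT lo s t ↔ lo (restr hT s (delta hT s t)) (restr hT t (delta hT s t)) :=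
  ⟨fun hst => (hst.resolve_left fun hlt => h.1 hlt.le).2, fun hlo => Or.inr ⟨h, hlo⟩⟩

theorem lexLT_iff_of_le {s t σ τ : T} (h : Incomp s t) (hs : s ≤ σ) (ht : t ≤ τ) :
    lexLT hT lo s t ↔ lexLT hT lo σ τ := by
  rw [lexLT_iff_of_incomp hT h, lexLT_iff_of_incomp hT (h.of_le hT hs ht),
    delta_eq_of_le hT h hs ht, ← restr_eq_restr hT hs (delta_le_nodeHt_left hT h),
    ← restr_eq_restr hT ht (delta_le_nodeHt_right hT h)]

theorem lexLT_irrefl (t : T) : ¬ lexLT hT lo t t :=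
  fun h => h.elim (lt_irrefl t) fun h => h.1.1 le_rfl

theorem lexLT_asymm (hlo : IsLevelOrderFamily hT lo) {s t : T} (h : lexLT hT lo s t) :
    ¬ lexLT hT lo t s := by
  rintro (hts | ⟨hinc, hlo'⟩)
  · rcases h with hst | ⟨hinc, -⟩
    exacts [hst.not_gt hts, hinc.2 hts.le]
  · rw [lexLT_iff_of_incomp hT hinc.symm, delta_comm] at h
    exact hlo.2.1 _ (hlo.2.2.1 _ _ _ h hlo')

theorem lexLT_or_lexLT_of_incomp (hlo : IsLevelOrderFamily hT lo) {s t : T} (h : Incomp s t) :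
    lexLT hT lo s t ∨ lexLT hT lo t s := by
  rw [lexLT_iff_of_incomp hT h, lexLT_iff_of_incomp hT h.symm, delta_comm hT t s]
  exact hlo.2.2.2 _ _ (restr_delta_ne hT h) <| by
    rw [nodeHt_restr hT (delta_le_nodeHt_left hT h), nodeHt_restr hT (delta_le_nodeHt_right hT h)]

theorem tpPerp_of_le {a b a' b' : T × T} {t : Fin 2 → Bool} (h : tpPerp hT lo a b t)
    (ha₁ : a.1 ≤ a'.1) (ha₂ : a.2 ≤ a'.2) (hb₁ : b.1 ≤ b'.1) (hb₂ : b.2 ≤ b'.2) :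
    tpPerp hT lo a' b' t := by
  obtain ⟨h₁, h₂, hlex₁, hlex₂⟩ := h
  refine ⟨h₁.of_le hT ha₁ hb₁, h₂.of_le hT ha₂ hb₂, ?_, ?_⟩
  · split_ifs at hlex₁ ⊢
    exacts [(lexLT_iff_of_le hT h₁ ha₁ hb₁).1 hlex₁, (lexLT_iff_of_le hT h₁.symm hb₁ ha₁).1 hlex₁]
  · split_ifs at hlex₂ ⊢
    exacts [(lexLT_iff_of_le hT h₂ ha₂ hb₂).1 hlex₂, (lexLT_iff_of_le hT h₂.symm hb₂ ha₂).1 hlex₂]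

theorem restr_ne_of_lexLT_of_lexLT (hlo : IsLevelOrderFamily hT lo) {a₁ a₂ c : T}
    (h₁ : lexLT hT lo a₁ c) (h₂ : lexLT hT lo c a₂) (hc₁ : nodeHt hT c < nodeHt hT a₁) :
    restr hT a₁ (nodeHt hT c) ≠ restr hT a₂ (nodeHt hT c) := by
  intro heq
  set z := restr hT a₁ (nodeHt hT c)
  have hz₁ : z ≤ a₁ := restr_le hT _ _
  have hz₂ : z ≤ a₂ := heq ▸ restr_le hT _ _
  have hz : nodeHt hT z = nodeHt hT c := nodeHt_restr hT hc₁.le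
  by_cases hzc : z = c
  · exact lexLT_asymm hT hlo h₁ (Or.inl (hzc ▸ hz₁.lt_of_ne fun h => hc₁.ne (h ▸ hz).symm))
  have hinc := incomp_of_ne_of_nodeHt_eq hT hzc hz
  rcases lexLT_or_lexLT_of_incomp hT hlo hinc with hlt | hlt
  · exact lexLT_asymm hT hlo h₂ ((lexLT_iff_of_le hT hinc hz₂ le_rfl).1 hlt)
  · exact lexLT_asymm hT hlo h₁ ((lexLT_iff_of_le hT hinc.symm le_rfl hz₁).1 hlt)

theorem incomp_and_delta_le_of_lexLT_of_lexLT (hlo : IsLevelOrderFamily hT lo) {a₁ a₂ c : T}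
    (h₁ : lexLT hT lo a₁ c) (h₂ : lexLT hT lo c a₂) (hc₁ : nodeHt hT c < nodeHt hT a₁)
    (hc₂ : nodeHt hT c < nodeHt hT a₂) :
    Incomp a₁ a₂ ∧ delta hT a₁ a₂ ≤ nodeHt hT c :=
  have hne := restr_ne_of_lexLT_of_lexLT hT hlo h₁ h₂ hc₁
  ⟨incomp_of_restr_ne hT hc₁.le hc₂.le hne, delta_le_of_restr_ne hT hne⟩

end Lex

section Omega1

theorem countable_Iio_of_lt_omega1 {ξ : Ordinal} (h : ξ < omega1) : (Iio ξ).Countable := by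
  rw [← Cardinal.le_aleph0_iff_set_countable, Cardinal.mk_Iio_ordinal, Cardinal.lift_le_aleph0,
    ← Cardinal.lt_aleph_one_iff]
  exact Cardinal.lt_ord.1 h

theorem not_countable_Iio_omega1 : ¬ (Iio omega1).Countable := by
  rw [← Cardinal.le_aleph0_iff_set_countable, Cardinal.mk_Iio_ordinal, Cardinal.lift_le_aleph0,
    omega1, Cardinal.card_ord, ← Cardinal.lt_aleph_one_iff]
  exact lt_irrefl _

theorem not_countable_Ico_omega1 {μ : Ordinal} (h : μ < omega1) : ¬ (Ico μ omega1).Countable :=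
  fun hc => not_countable_Iio_omega1 <|
    Iio_union_Ico_eq_Iio h.le ▸ (countable_Iio_of_lt_omega1 h).union hc

theorem succ_lt_omega1 {ξ : Ordinal} (h : ξ < omega1) : Order.succ ξ < omega1 :=
  (Cardinal.isSuccLimit_ord Cardinal.aleph0_lt_aleph_one.le).succ_lt h

theorem exists_not_countable_fiber {α β : Type*} {S : Set α} (hS : ¬ S.Countable) {f : α → β}
    {C : Set β} (hC : C.Countable) (hf : MapsTo f S C) : ∃ c, ¬ {x ∈ S | f x = c}.Countable := by
  by_contra! h
  refine hS ((hC.biUnion fun c _ => h c).mono fun x hx => ?_)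
  exact mem_biUnion (hf hx) ⟨hx, rfl⟩

theorem exists_cofinal_fiber_omega1 {β : Type*} [Countable β] (f : Ordinal → β) :
    ∃ b, ∀ η < omega1, ∃ ξ ∈ f ⁻¹' {b}, η ≤ ξ ∧ ξ < omega1 := by
  obtain ⟨b, hb⟩ := exists_not_countable_fiber not_countable_Iio_omega1 (f := f)
    countable_univ (mapsTo_univ _ _)
  refine ⟨b, fun η hη => ?_⟩
  by_contra! h
  refine hb ((countable_Iio_of_lt_omega1 hη).mono ?_)
  rintro ξ ⟨hξω, hξb⟩
  exact not_le.1 fun hle => (h ξ hξb hle).not_gt hξω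

theorem exists_monotone_closurePoints_omega1 {g : Ordinal → Ordinal}
    (hg : ∀ ξ < omega1, g ξ < omega1) :
    ∃ c : Ordinal → Ordinal, Monotone c ∧
      ∀ η < omega1, η ≤ c η ∧ c η < omega1 ∧ ∀ ξ < c η, g ξ < c η := by
  set F : Ordinal → Ordinal := fun ζ => ⨆ ξ : Iio ζ, Order.succ (g ξ)
  have hgF : ∀ ξ ζ, ξ < ζ → g ξ < F ζ := fun ξ ζ h =>
    (Order.lt_succ _).trans_le (Ordinal.le_iSup (fun ξ : Iio ζ => Order.succ (g ξ)) ⟨ξ, h⟩)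
  have hF : Monotone F := fun ζ ζ' h =>
    Ordinal.iSup_le fun ξ => Order.succ_le_of_lt (hgF ξ ζ' (ξ.2.trans_le h))
  have hFω : ∀ ζ < omega1, F ζ < omega1 := fun ζ hζ => by
    have := (countable_Iio_of_lt_omega1 hζ).to_subtype
    have hω : omega1 = Ordinal.omega 1 := Cardinal.ord_aleph 1
    have hlt (ξ : Iio ζ) : Order.succ (g ξ) < Ordinal.omega 1 :=
      hω ▸ succ_lt_omega1 (hg _ (ξ.2.trans hζ))
    exact hω ▸ Ordinal.iSup_lt_omega_one hlt
  refine ⟨Ordinal.nfp F, Ordinal.nfp_monotone hF, fun η hη => ⟨Ordinal.le_nfp F η,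
    Cardinal.nfp_lt_ord_of_isRegular Cardinal.isRegular_aleph_one
      Cardinal.aleph0_lt_aleph_one.ne' hFω hη, fun ξ hξ => ?_⟩⟩
  obtain ⟨n, hn⟩ := Ordinal.lt_nfp_iff.1 hξ
  refine (hgF ξ _ hn).trans_le ?_
  simpa only [Function.iterate_succ_apply'] using Ordinal.iterate_le_nfp F η (n + 1)

theorem exists_sparse_selection_omega1 {W : Set Ordinal}
    (hW : ∀ η < omega1, ∃ ξ ∈ W, η ≤ ξ ∧ ξ < omega1) {g : Ordinal → Ordinal}
    (hg : ∀ ξ < omega1, g ξ < omega1) :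
    ∃ s : Ordinal → Ordinal, ∀ η < omega1, (s η ∈ W ∧ η ≤ s η ∧ s η < omega1) ∧
      ∀ θ, η ≤ θ → θ < omega1 → s η = s θ ∨ g (s η) < s θ := by
  obtain ⟨c, hc_mono, hc⟩ := exists_monotone_closurePoints_omega1 hg
  -- `s η` is the first point of `W` above the closure point `c η`: for `η ≤ θ`, either
  -- `s η < c θ`, and then `g (s η) < c θ ≤ s θ`, or `s η` already qualifies for `θ`.
  let S (η : Ordinal) : Set Ordinal := {ξ ∈ W | c η ≤ ξ}
  have hne : ∀ η < omega1, (S η).Nonempty := fun η hη => by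
    obtain ⟨ξ, hξW, hξ, -⟩ := hW (c η) (hc η hη).2.1
    exact ⟨ξ, hξW, hξ⟩
  refine ⟨fun η => sInf (S η), fun η hη => ⟨?_, fun θ hηθ hθ => ?_⟩⟩
  · obtain ⟨hW', hcs⟩ := csInf_mem (hne η hη)
    obtain ⟨ξ, hξW, hξ, hξω⟩ := hW (c η) (hc η hη).2.1
    exact ⟨hW', (hc η hη).1.trans hcs, (csInf_le' (s := S η) ⟨hξW, hξ⟩).trans_lt hξω⟩
  have hle : sInf (S η) ≤ sInf (S θ) :=
    csInf_le_csInf' (hne θ hθ) fun ξ hξ => ⟨hξ.1, (hc_mono hηθ).trans hξ.2⟩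
  rcases lt_or_ge (sInf (S η)) (c θ) with hlt | hge
  · exact Or.inr (((hc θ hθ).2.2 _ hlt).trans_le (csInf_mem (hne θ hθ)).2)
  · exact Or.inl (hle.antisymm (csInf_le' (s := S θ) ⟨(csInf_mem (hne η hη)).1, hge⟩))

end Omega1

section Restrict

variable {T : Type} [PartialOrder T] (hT : IsSetTree T) {lo : T → T → Prop}
  {s t : T} {ξ : Ordinal}

theorem Incomp.restr (h : Incomp s t) (hδ : delta hT s t ≤ ξ) (hs : ξ ≤ nodeHt hT s)
    (ht : ξ ≤ nodeHt hT t) : Incomp (restr hT s ξ) (restr hT t ξ) :=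
  h.of_le_of_delta_le hT (restr_le hT s ξ) (restr_le hT t ξ) (by rwa [nodeHt_restr hT hs])
    (by rwa [nodeHt_restr hT ht])

theorem delta_restr (h : Incomp s t) (hδ : delta hT s t ≤ ξ) (hs : ξ ≤ nodeHt hT s)
    (ht : ξ ≤ nodeHt hT t) : delta hT (restr hT s ξ) (restr hT t ξ) = delta hT s t :=
  (delta_eq_of_le hT (h.restr hT hδ hs ht) (restr_le hT s ξ) (restr_le hT t ξ)).symm

theorem lexLT_restr (h : Incomp s t) (hδ : delta hT s t ≤ ξ) (hs : ξ ≤ nodeHt hT s)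
    (ht : ξ ≤ nodeHt hT t) (hlex : lexLT hT lo s t) :
    lexLT hT lo (restr hT s ξ) (restr hT t ξ) :=
  (lexLT_iff_of_le hT (h.restr hT hδ hs ht) (restr_le hT s ξ) (restr_le hT t ξ)).2 hlex

theorem restr_pair_spec_of_separated (hlo : IsLevelOrderFamily hT lo) {a₁ a₂ c : T}
    (hlex : lexLT hT lo a₁ a₂) (h₁ : lexLT hT lo a₁ c) (h₂ : lexLT hT lo c a₂)
    (hcξ : nodeHt hT c < ξ) (hξ₁ : ξ ≤ nodeHt hT a₁) (hξ₂ : ξ ≤ nodeHt hT a₂) :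
    nodeHt hT (restr hT a₁ ξ) = ξ ∧ nodeHt hT (restr hT a₂ ξ) = ξ ∧
      lexLT hT lo (restr hT a₁ ξ) (restr hT a₂ ξ) ∧
      delta hT (restr hT a₁ ξ) (restr hT a₂ ξ) ≤ nodeHt hT c := by
  obtain ⟨hinc, hδ⟩ := incomp_and_delta_le_of_lexLT_of_lexLT hT hlo h₁ h₂
    (hcξ.trans_le hξ₁) (hcξ.trans_le hξ₂)
  have hδξ := hδ.trans hcξ.le
  exact ⟨nodeHt_restr hT hξ₁, nodeHt_restr hT hξ₂, lexLT_restr hT hinc hδξ hξ₁ hξ₂ hlex,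
    (delta_restr hT hinc hδξ hξ₁ hξ₂).trans_le hδ⟩

end Restrict

theorem PairwiseDisjointPairs.injOn_fst {T : Type} {A : Set (T × T)}
    (hA : PairwiseDisjointPairs A) : InjOn Prod.fst A :=
  fun a ha b hb hab => not_not.1 fun hne => (hA a ha b hb hne).1 hab

theorem PairwiseDisjointPairs.injOn_snd {T : Type} {A : Set (T × T)}
    (hA : PairwiseDisjointPairs A) : InjOn Prod.snd A :=
  fun a ha b hb hab => not_not.1 fun hne => (hA a ha b hb hne).2.2.2 hab

section Families

variable {T : Type} [PartialOrder T] {hT : IsSetTree T} {lo : T → T → Prop}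

theorem IsOmega1Tree.countable_setOf_nodeHt_lt (h1 : IsOmega1Tree hT) {ξ : Ordinal}
    (hξ : ξ < omega1) : {t : T | nodeHt hT t < ξ}.Countable :=
  ((countable_Iio_of_lt_omega1 hξ).biUnion fun α _ => h1.2.2 α).mono fun t ht =>
    mem_biUnion (x := nodeHt hT t) ht rfl

theorem IsOmega1Tree.countable_of_injOn (h1 : IsOmega1Tree hT) {A : Set (T × T)} {f : T × T → T}
    (hf : InjOn f A) {ξ : Ordinal} (hξ : ξ < omega1) : {b ∈ A | nodeHt hT (f b) < ξ}.Countable :=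
  MapsTo.countable_of_injOn (fun _ hb => hb.2) (hf.mono fun _ hb => hb.1)
    (h1.countable_setOf_nodeHt_lt hξ)

theorem PairwiseDisjointPairs.exists_mem_le_nodeHt {A : Set (T × T)}
    (hA : PairwiseDisjointPairs A) (hAc : ¬ A.Countable) (h1 : IsOmega1Tree hT) {ξ : Ordinal}
    (hξ : ξ < omega1) : ∃ b ∈ A, ξ ≤ nodeHt hT b.1 ∧ ξ ≤ nodeHt hT b.2 := by
  by_contra! h
  refine hAc (((h1.countable_of_injOn hA.injOn_fst hξ).union
    (h1.countable_of_injOn hA.injOn_snd hξ)).mono fun b hb => ?_)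
  by_cases h' : nodeHt hT b.1 < ξ
  exacts [Or.inl ⟨hb, h'⟩, Or.inr ⟨hb, h b hb (not_lt.1 h')⟩]

theorem NormalFamily.exists_level {B : Set (T × T)} (hB : NormalFamily hT lo B) :
    ∃ ν < omega1, ∀ b ∈ B, Incomp b.1 b.2 ∧ delta hT b.1 b.2 ≤ ν ∧
      ν ≤ nodeHt hT b.1 ∧ ν ≤ nodeHt hT b.2 := by
  obtain ⟨hBc, hBlex, -, hBht, hBdd, hBlt, hBeq⟩ := hB
  set ν := sInf {α | ∃ b ∈ B, α = nodeHt hT b.1}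
  have hν (b) (hb : b ∈ B) : ν ≤ nodeHt hT b.1 ∧ nodeHt hT b.1 < omega1 :=
    show nodeHt hT b.1 ∈ {α | ν ≤ α ∧ α < omega1} from hBeq ▸ ⟨b, hb, rfl⟩
  obtain ⟨b, hb⟩ : B.Nonempty :=
    not_not.1 fun h => hBc (not_nonempty_iff_eq_empty.1 h ▸ countable_empty)
  refine ⟨ν, (hν b hb).1.trans_lt (hν b hb).2, fun b hb =>
    ⟨?_, ?_, (hν b hb).1, hBht b hb ▸ (hν b hb).1⟩⟩
  · refine incomp_of_ne_of_nodeHt_eq hT (fun h => ?_) (hBht b hb)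
    exact lexLT_irrefl hT b.1 (by nth_rewrite 2 [h]; exact hBlex b hb)
  · exact (le_csSup hBdd ⟨b, hb, rfl⟩).trans hBlt.le

theorem normalFamily_image {p : Ordinal → T × T} {μ δ : Ordinal} (hμ : μ < omega1) (hδ : δ < μ)
    (hp : ∀ η ∈ Ico μ omega1, nodeHt hT (p η).1 = η ∧ nodeHt hT (p η).2 = η ∧
      lexLT hT lo (p η).1 (p η).2 ∧ delta hT (p η).1 (p η).2 ≤ δ) :
    NormalFamily hT lo (p '' Ico μ omega1) := by
  have hht : {α | ∃ b ∈ p '' Ico μ omega1, α = nodeHt hT b.1} = Ico μ omega1 := by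
    ext α
    constructor
    · rintro ⟨_, ⟨η, hη, rfl⟩, rfl⟩
      rwa [(hp η hη).1]
    · exact fun hα => ⟨p α, ⟨α, hα, rfl⟩, (hp α hα).1.symm⟩
  have hΔ : ∀ α ∈ {α | ∃ b ∈ p '' Ico μ omega1, α = delta hT b.1 b.2}, α ≤ δ := by
    rintro _ ⟨_, ⟨η, hη, rfl⟩, rfl⟩
    exact (hp η hη).2.2.2
  refine ⟨fun hc => not_countable_Ico_omega1 hμ ((hc.image fun b => nodeHt hT b.1).mono ?_),
    ?_, ?_, ?_, ⟨δ, hΔ⟩, ?_, ?_⟩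
  · exact fun η hη => ⟨p η, ⟨η, hη, rfl⟩, (hp η hη).1⟩
  · rintro _ ⟨η, hη, rfl⟩
    exact (hp η hη).2.2.1
  · rintro _ ⟨η, hη, rfl⟩ _ ⟨θ, hθ, rfl⟩ hne
    have hηθ : η ≠ θ := fun h => hne (h ▸ rfl)
    obtain ⟨h₁, h₂, -⟩ := hp η hη
    obtain ⟨h₁', h₂', -⟩ := hp θ hθ
    refine ⟨fun h => ?_, fun h => ?_, fun h => ?_, fun h => ?_⟩ <;>
      have := congrArg (nodeHt hT) h <;> simp only [h₁, h₂, h₁', h₂'] at this <;> exact hηθ this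
  · rintro _ ⟨η, hη, rfl⟩
    rw [(hp η hη).1, (hp η hη).2.1]
  · rw [hht, csInf_Ico hμ]
    exact (csSup_le' hΔ).trans_lt hδ
  · rw [hht, csInf_Ico hμ]
    rfl

theorem exists_separated_subfamily (h1 : IsOmega1Tree hT) {B : Set (T × T)}
    (hBc : ¬ B.Countable) (hBd : PairwiseDisjointPairs B) (hBlex : ∀ b ∈ B, lexLT hT lo b.1 b.2)
    {ν : Ordinal} (hν : ν < omega1) (hB : ∀ b ∈ B, Incomp b.1 b.2 ∧ delta hT b.1 b.2 ≤ ν ∧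
      ν ≤ nodeHt hT b.1 ∧ ν ≤ nodeHt hT b.2) :
    ∃ B' ⊆ B, ¬ B'.Countable ∧ SeparatedPairs (lexLT hT lo) B' := by
  set B₁ := {b ∈ B | ν < nodeHt hT b.2}
  have hB₁ : ¬ B₁.Countable := fun hc => hBc <|
    (hc.union (h1.countable_of_injOn hBd.injOn_snd (succ_lt_omega1 hν))).mono fun b hb => by
      by_cases h : ν < nodeHt hT b.2
      exacts [Or.inl ⟨hb, h⟩, Or.inr ⟨hb, Order.lt_succ_iff.2 (not_lt.1 h)⟩]
  obtain ⟨v, hv⟩ := exists_not_countable_fiber hB₁ (f := fun b => restr hT b.2 ν) (h1.2.2 ν)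
    fun b hb => nodeHt_restr hT hb.2.le
  refine ⟨_, fun b hb => hb.1.1, hv, v, fun b ⟨⟨hb, hνb⟩, hbv⟩ =>
    ⟨?_, hbv ▸ Or.inl (restr_lt hT hνb)⟩⟩
  obtain ⟨hinc, hδ, hν₁, -⟩ := hB b hb
  have hvb : v ≤ b.2 := hbv ▸ restr_le hT _ _
  have hv' : nodeHt hT v = ν := hbv ▸ nodeHt_restr hT hνb.le
  exact (lexLT_iff_of_le hT (hinc.of_le_of_delta_le hT le_rfl hvb (hδ.trans hν₁) (hv' ▸ hδ))
    le_rfl hvb).2 (hBlex b hb)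

end Families

section Equivalences

variable {T : Type} [PartialOrder T] {hT : IsSetTree T} {lo : T → T → Prop}

def RealizesTypesOnNormalFamilies (hT : IsSetTree T) (lo : T → T → Prop) : Prop :=
  ∀ B : Set (T × T), NormalFamily hT lo B → ∀ t : Fin 2 → Bool,
    ∃ a ∈ B, ∃ b ∈ B, nodeHt hT a.1 < nodeHt hT b.1 ∧ tpPerp hT lo a b t

def RealizesTypesOnSeparatedFamilies (hT : IsSetTree T) (lo : T → T → Prop) : Prop :=
  ∀ A : Set (T × T), ¬ A.Countable → (∀ a ∈ A, lexLT hT lo a.1 a.2) →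
    PairwiseDisjointPairs A → SeparatedPairs (lexLT hT lo) A → ∀ t : Fin 2 → Bool,
      ∃ a ∈ A, ∃ b ∈ A,
        max (nodeHt hT a.1) (nodeHt hT a.2) < min (nodeHt hT b.1) (nodeHt hT b.2) ∧
        tpPerp hT lo a b t

theorem WeaklyBiEntangled.realizesTypesOnSeparatedFamilies (h1 : IsOmega1Tree hT)
    (h : WeaklyBiEntangled hT lo) : RealizesTypesOnSeparatedFamilies hT lo := by
  intro A hAc hAlex hAd hAs t
  obtain ⟨ξ₀, hξ₀, hA⟩ := h A hAc hAlex hAd hAs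
  obtain ⟨b, hb, hb₁, hb₂⟩ := hAd.exists_mem_le_nodeHt hAc h1 hξ₀
  obtain ⟨a, ha, ha₁, ha₂, hab⟩ := hA b hb hb₁ hb₂ t
  exact ⟨a, ha, b, hb, (max_lt ha₁ ha₂).trans_le (le_min hb₁ hb₂), hab⟩

theorem RealizesTypesOnSeparatedFamilies.realizesTypesOnNormalFamilies (h1 : IsOmega1Tree hT)
    (h : RealizesTypesOnSeparatedFamilies hT lo) : RealizesTypesOnNormalFamilies hT lo := by
  intro B hB t
  obtain ⟨ν, hν, hBν⟩ := hB.exists_level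
  obtain ⟨B', hB'B, hB'c, hB's⟩ := exists_separated_subfamily h1 hB.1 hB.2.2.1 hB.2.1 hν hBν
  obtain ⟨a, ha, b, hb, hab, hperp⟩ := h B' hB'c (fun a ha => hB.2.1 a (hB'B ha))
    (fun a ha b hb => hB.2.2.1 a (hB'B ha) b (hB'B hb)) hB's t
  exact ⟨a, hB'B ha, b, hB'B hb, (le_max_left _ _).trans_lt (hab.trans_le (min_le_left _ _)),
    hperp⟩

theorem RealizesTypesOnNormalFamilies.weaklyBiEntangled (hlo : IsLevelOrderFamily hT lo)
    (h1 : IsOmega1Tree hT) (h : RealizesTypesOnNormalFamilies hT lo) :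
    WeaklyBiEntangled hT lo := by
  intro A _ hAlex _ ⟨c, hc⟩
  by_contra! hbad
  have : Nonempty T := ⟨c⟩
  choose! b hbA hb₁ hb₂ tp hbad using hbad
  obtain ⟨t₀, hW⟩ := exists_cofinal_fiber_omega1 tp
  obtain ⟨s, hs⟩ := exists_sparse_selection_omega1 hW
    (g := fun ξ => max (nodeHt hT (b ξ).1) (nodeHt hT (b ξ).2)) fun ξ _ => max_lt (h1.1 _) (h1.1 _)
  set p : Ordinal → T × T := fun η => (restr hT (b (s η)).1 η, restr hT (b (s η)).2 η)
  have hp : ∀ η ∈ Ico (Order.succ (nodeHt hT c)) omega1,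
      η ≤ nodeHt hT (b (s η)).1 ∧ nodeHt hT (p η).1 = η ∧ nodeHt hT (p η).2 = η ∧
      lexLT hT lo (p η).1 (p η).2 ∧ delta hT (p η).1 (p η).2 ≤ nodeHt hT c := by
    intro η ⟨hcη, hη⟩
    obtain ⟨-, hηs, hs⟩ := (hs η hη).1
    have hη₁ := hηs.trans (hb₁ _ hs)
    exact ⟨hη₁, restr_pair_spec_of_separated hT hlo (hAlex _ (hbA _ hs)) (hc _ (hbA _ hs)).1
      (hc _ (hbA _ hs)).2 (Order.succ_le_iff.1 hcη) hη₁ (hηs.trans (hb₂ _ hs))⟩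
  obtain ⟨_, ⟨η, hη, rfl⟩, _, ⟨θ, hθ, rfl⟩, hηθ, hperp⟩ :=
    h _ (normalFamily_image (succ_lt_omega1 (h1.1 c)) (Order.lt_succ _) fun η hη => (hp η hη).2) t₀
  rw [(hp η hη).2.1, (hp θ hθ).2.1] at hηθ
  rcases (hs η hη.2).2 θ hηθ.le hθ.2 with heq | hsep
  · refine hperp.1.1 ?_
    change restr hT (b (s η)).1 η ≤ restr hT (b (s θ)).1 θ
    rw [heq]
    exact restr_mono hT hηθ.le (hp θ hθ).1
  · obtain ⟨hθW, -, hθω⟩ := (hs θ hθ.2).1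
    refine hbad (s θ) hθω (b (s η)) (hbA _ (hs η hη.2).1.2.2)
      ((le_max_left _ _).trans_lt hsep) ((le_max_right _ _).trans_lt hsep) ?_
    rw [show tp (s θ) = t₀ from hθW]
    exact tpPerp_of_le hT hperp (restr_le hT _ _) (restr_le hT _ _) (restr_le hT _ _)
      (restr_le hT _ _)

end Equivalences

/-- Lemma (equivalent formulations of weak bi-entangledness):
(a) `T` is weakly bi-entangled;
(b) for every normal family `B ⊆ [T]²` and every type `t` there are `a, b ∈ B` with
    `ht(a) < ht(b)` and `tp⊥(a,b) = t`;
(c) for every uncountable pairwise disjoint separated family `A ⊆ [T]²` and every type `t`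
    there are `a, b ∈ A` with `max(ht(a(0)),ht(a(1))) < min(ht(b(0)),ht(b(1)))`
    and `tp⊥(a,b) = t`. -/
theorem weaklyBiEntangled_equivalences {T : Type} [PartialOrder T]
    (hT : IsSetTree T) (lo : T → T → Prop) (hlo : IsLevelOrderFamily hT lo)
    (hAron : IsAronszajnTree hT) :
    (WeaklyBiEntangled hT lo ↔
      (∀ B : Set (T × T), NormalFamily hT lo B → ∀ t : Fin 2 → Bool,
        ∃ a ∈ B, ∃ b ∈ B, nodeHt hT a.1 < nodeHt hT b.1 ∧ tpPerp hT lo a b t)) ∧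
    ((∀ B : Set (T × T), NormalFamily hT lo B → ∀ t : Fin 2 → Bool,
        ∃ a ∈ B, ∃ b ∈ B, nodeHt hT a.1 < nodeHt hT b.1 ∧ tpPerp hT lo a b t) ↔
      (∀ A : Set (T × T), ¬ A.Countable →
        (∀ a ∈ A, lexLT hT lo a.1 a.2) →
        PairwiseDisjointPairs A → SeparatedPairs (lexLT hT lo) A →
        ∀ t : Fin 2 → Bool,
          ∃ a ∈ A, ∃ b ∈ A,
            max (nodeHt hT a.1) (nodeHt hT a.2) < min (nodeHt hT b.1) (nodeHt hT b.2) ∧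
            tpPerp hT lo a b t)) := by
  have h1 : IsOmega1Tree hT := hAron.1
  have hac (h : WeaklyBiEntangled hT lo) : RealizesTypesOnSeparatedFamilies hT lo :=
    h.realizesTypesOnSeparatedFamilies h1
  have hcb (h : RealizesTypesOnSeparatedFamilies hT lo) : RealizesTypesOnNormalFamilies hT lo :=
    h.realizesTypesOnNormalFamilies h1
  have hba (h : RealizesTypesOnNormalFamilies hT lo) : WeaklyBiEntangled hT lo :=
    h.weaklyBiEntangled hlo h1
  exact ⟨⟨hcb ∘ hac, hba⟩, ⟨hac ∘ hba, hcb⟩⟩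

end
end

section
/- Let X ⊆ ℝ and let (X,E) be an open graph on X. Let n be a positive integer and let W ∈ Hⁿ, where H is the coideal of non-countably-chromatic subsets of X and Hⁿ is its n-th Fubini power. Then W \ ∂W ∉ Hⁿ, where ∂W = {x̄ ∈ W : for every ε > 0 there is ȳ ∈ W with (x_i,y_i) ∈ E and |x_i − y_i| < ε for all i < n}. -/
noncomputable section

open Set

/-- `Y` is independent for the edge set `E`. -/
def IndepOn (E : Set (ℝ × ℝ)) (Y : Set ℝ) : Prop :=
  ∀ x ∈ Y, ∀ y ∈ Y, x ≠ y → (x, y) ∉ E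

/-- `Y` is countably chromatic for the edge set `E`: a countable union of independent
sets. -/
def CtblChrom (E : Set (ℝ × ℝ)) (Y : Set ℝ) : Prop :=
  ∃ f : ℕ → Set ℝ, Y = (⋃ n, f n) ∧ ∀ n, IndepOn E (f n)

/-- The coideal `H` of subsets of `X` which are not countably chromatic. -/
def Coideal (X : Set ℝ) (E : Set (ℝ × ℝ)) : Set (Set ℝ) :=
  {Y | Y ⊆ X ∧ ¬ CtblChrom E Y}

/-- The Fubini powers of a coideal `H1` on `ℝ`: `H¹ = H1` and
`Hⁿ = {W : {x̄ : W_x̄ ∈ H1} ∈ Hⁿ⁻¹}` for `n > 1`. (The value at `n = 0` is irrelevant.) -/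
def FubiniPow (H1 : Set (Set ℝ)) : (n : ℕ) → Set (Set (Fin n → ℝ))
  | 0 => ∅
  | 1 => {W | {x : ℝ | (fun _ : Fin 1 => x) ∈ W} ∈ H1}
  | (n + 2) =>
      {W | {v : Fin (n + 1) → ℝ | {y : ℝ | Fin.snoc v y ∈ W} ∈ H1} ∈ FubiniPow H1 (n + 1)}

/-- The boundary `∂W`: those `x̄ ∈ W` such that for every `ε > 0` there is `ȳ ∈ W`
with `(x i, y i) ∈ E` and `|x i − y i| < ε` for all `i < n`. -/
def Bdry (E : Set (ℝ × ℝ)) {n : ℕ} (W : Set (Fin n → ℝ)) : Set (Fin n → ℝ) :=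
  {x ∈ W | ∀ ε : ℝ, 0 < ε → ∃ y ∈ W, ∀ i, (x i, y i) ∈ E ∧ |x i - y i| < ε}

/- ### Auxiliary lemmas -/

lemma ctblChrom_mono {E : Set (ℝ × ℝ)} {Y Z : Set ℝ} (hZY : Z ⊆ Y)
    (hY : CtblChrom E Y) : CtblChrom E Z := by
  obtain ⟨f, hf, hind⟩ := hY
  refine ⟨fun n => f n ∩ Z, ?_, fun n x hx y hy hne => hind n x hx.1 y hy.1 hne⟩
  ext x
  simp only [mem_iUnion, mem_inter_iff]
  constructor
  · intro hx
    have hx' := hZY hx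
    rw [hf] at hx'
    obtain ⟨n, hn⟩ := mem_iUnion.1 hx'
    exact ⟨n, hn, hx⟩
  · rintro ⟨n, _, h⟩; exact h

lemma ctblChrom_empty {E : Set (ℝ × ℝ)} : CtblChrom E (∅ : Set ℝ) :=
  ⟨fun _ => ∅, by simp, fun _ x hx => absurd hx (notMem_empty x)⟩

lemma IndepOn.ctblChrom {E : Set (ℝ × ℝ)} {Y : Set ℝ} (h : IndepOn E Y) : CtblChrom E Y :=
  ⟨fun _ => Y, (iUnion_const Y).symm, fun _ => h⟩

lemma ctblChrom_iUnion {E : Set (ℝ × ℝ)} {ι : Type} [Countable ι] (f : ι → Set ℝ)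
    (h : ∀ i, CtblChrom E (f i)) : CtblChrom E (⋃ i, f i) := by
  rcases isEmpty_or_nonempty ι with hι | hι
  · simpa [iUnion_of_empty] using (ctblChrom_empty : CtblChrom E ∅)
  · obtain ⟨g, hg⟩ := exists_surjective_nat ι
    choose F hF1 hF2 using h
    refine ⟨fun k => F (g k.unpair.1) k.unpair.2, ?_, fun k => hF2 _ _⟩
    ext x
    simp only [mem_iUnion]
    constructor
    · rintro ⟨i, hx⟩
      obtain ⟨k, rfl⟩ := hg i
      rw [hF1] at hx
      obtain ⟨m, hm⟩ := mem_iUnion.1 hx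
      exact ⟨Nat.pair k m, by simpa [Nat.unpair_pair] using hm⟩
    · rintro ⟨k, hx⟩
      refine ⟨g k.unpair.1, ?_⟩
      rw [hF1]
      exact mem_iUnion.2 ⟨_, hx⟩

lemma ctblChrom_union {E : Set (ℝ × ℝ)} {Y Z : Set ℝ} (hY : CtblChrom E Y)
    (hZ : CtblChrom E Z) : CtblChrom E (Y ∪ Z) := by
  rw [Set.union_eq_iUnion]
  exact ctblChrom_iUnion _ (by rintro (_ | _) <;> simpa)

lemma coideal_nonempty {X : Set ℝ} {E : Set (ℝ × ℝ)} {Y : Set ℝ}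
    (h : Y ∈ Coideal X E) : Y.Nonempty := by
  rcases Y.eq_empty_or_nonempty with rfl | hne
  · exact absurd ctblChrom_empty h.2
  · exact hne

lemma coideal_sigma {X : Set ℝ} {E : Set (ℝ × ℝ)} {S : Set ℝ} (hS : S ∈ Coideal X E)
    {ι : Type} [Countable ι] (f : ι → Set ℝ) (hcov : S ⊆ ⋃ i, f i) :
    ∃ i, S ∩ f i ∈ Coideal X E := by
  by_contra h
  push_neg at h
  apply hS.2
  have hrw : S = ⋃ i, S ∩ f i := by
    ext x
    simp only [mem_iUnion, mem_inter_iff]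
    constructor
    · intro hx
      obtain ⟨i, hi⟩ := mem_iUnion.1 (hcov hx)
      exact ⟨i, hx, hi⟩
    · rintro ⟨i, hx, _⟩; exact hx
  rw [hrw]
  refine ctblChrom_iUnion _ (fun i => ?_)
  by_contra hc
  exact h i ⟨inter_subset_left.trans hS.1, hc⟩

/-- Key 1-dimensional lemma: if `S ∈ H` then for any `δ > 0` there are rational
intervals `J, J'` with `J × J' ⊆ U`, all pairs within `δ`, and both `S ∩ J, S ∩ J' ∈ H`. -/
lemma local_pair {X : Set ℝ} {E U : Set (ℝ × ℝ)} (hU : IsOpen U) (hEU : E = U ∩ X ×ˢ X)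
    {S : Set ℝ} (hS : S ∈ Coideal X E) {δ : ℝ} (hδ : 0 < δ) :
    ∃ p q p' q' : ℚ, (Ioo (p : ℝ) q ×ˢ Ioo (p' : ℝ) q' ⊆ U)
      ∧ (∀ a ∈ Ioo (p : ℝ) (q : ℝ), ∀ b ∈ Ioo (p' : ℝ) (q' : ℝ), |a - b| < δ)
      ∧ S ∩ Ioo (p : ℝ) q ∈ Coideal X E ∧ S ∩ Ioo (p' : ℝ) q' ∈ Coideal X E := by
  classical
  set T : Set ℝ := {x ∈ S | ∀ p q : ℚ, x ∈ Ioo (p : ℝ) q → S ∩ Ioo (p : ℝ) q ∈ Coideal X E}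
    with hTdef
  -- T ∈ H
  have hT : T ∈ Coideal X E := by
    refine ⟨fun x hx => hS.1 hx.1, fun hTc => hS.2 ?_⟩
    have hcov : S ⊆ T ∪ ⋃ pq : ℚ × ℚ,
        (if S ∩ Ioo (pq.1 : ℝ) pq.2 ∈ Coideal X E then ∅ else S ∩ Ioo (pq.1 : ℝ) pq.2) := by
      intro x hx
      by_cases hxT : x ∈ T
      · exact Or.inl hxT
      · right
        simp only [hTdef, mem_setOf_eq, not_and, not_forall] at hxT
        obtain ⟨p, q, hxpq, hnot⟩ := hxT hx
        refine mem_iUnion.2 ⟨(p, q), ?_⟩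
        rw [if_neg hnot]
        exact ⟨hx, hxpq⟩
    refine ctblChrom_mono hcov (ctblChrom_union hTc (ctblChrom_iUnion _ (fun pq => ?_)))
    by_cases hm : S ∩ Ioo (pq.1 : ℝ) pq.2 ∈ Coideal X E
    · rw [if_pos hm]; exact ctblChrom_empty
    · rw [if_neg hm]
      by_contra hc
      exact hm ⟨inter_subset_left.trans hS.1, hc⟩
  -- find a small rational length δ'
  obtain ⟨δ', hδ'0, hδ'⟩ := exists_rat_btwn (by linarith : (0 : ℝ) < δ / 3)
  have hδ'0' : (0 : ℝ) < δ' := hδ'0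
  -- cover T by intervals of length δ'
  obtain ⟨r, hr⟩ := coideal_sigma hT (fun r : ℚ => Ioo (r : ℝ) (r + δ')) (by
    intro x _
    obtain ⟨r, hr1, hr2⟩ := exists_rat_btwn (by linarith : x - (δ' : ℝ) < x)
    exact mem_iUnion.2 ⟨r, hr2, by linarith⟩)
  -- T ∩ I is not independent
  have hnotind : ¬ IndepOn E (T ∩ Ioo (r : ℝ) (r + δ')) :=
    fun hind => hr.2 hind.ctblChrom
  simp only [IndepOn, not_forall] at hnotind
  obtain ⟨a, ha, b, hb, hab, habE⟩ := hnotind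
  rw [not_not] at habE
  -- open neighborhood of the edge
  have habU : (a, b) ∈ U := (hEU ▸ habE).1
  obtain ⟨ε, hε0, hball⟩ := Metric.isOpen_iff.1 hU _ habU
  rw [← ball_prod_same] at hball
  set ε' : ℝ := min ε (δ / 3) with hε'def
  have hε'0 : 0 < ε' := lt_min hε0 (by linarith)
  have hε'ε : ε' ≤ ε := min_le_left _ _
  have hε'δ : ε' ≤ δ / 3 := min_le_right _ _
  -- rational intervals around a and b
  obtain ⟨p, hp1, hp2⟩ := exists_rat_btwn (by linarith : a - ε' < a)
  obtain ⟨q, hq1, hq2⟩ := exists_rat_btwn (by linarith : a < a + ε')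
  obtain ⟨p', hp'1, hp'2⟩ := exists_rat_btwn (by linarith : b - ε' < b)
  obtain ⟨q', hq'1, hq'2⟩ := exists_rat_btwn (by linarith : b < b + ε')
  have hJa : Ioo (p : ℝ) q ⊆ Metric.ball a ε := by
    intro z hz
    rw [Real.ball_eq_Ioo]
    constructor <;> [linarith [hz.1]; linarith [hz.2]]
  have hJb : Ioo (p' : ℝ) q' ⊆ Metric.ball b ε := by
    intro z hz
    rw [Real.ball_eq_Ioo]
    constructor <;> [linarith [hz.1]; linarith [hz.2]]
  refine ⟨p, q, p', q', ?_, ?_, ?_, ?_⟩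
  · intro z hz
    exact hball ⟨hJa hz.1, hJb hz.2⟩
  · intro z hz w hw
    have h1 : |z - a| < δ / 3 := by
      rw [abs_lt]; constructor <;> [linarith [hz.1]; linarith [hz.2]]
    have h2 : |a - b| < δ / 3 := by
      rw [abs_lt]
      obtain ⟨_, ha2⟩ := ha.2
      obtain ⟨_, hb2⟩ := hb.2
      constructor <;> [linarith [ha.2.1, hb.2.2]; linarith [ha.2.2, hb.2.1]]
    have h3 : |b - w| < δ / 3 := by
      rw [abs_lt]; constructor <;> [linarith [hw.2]; linarith [hw.1]]
    calc |z - w| = |(z - a) + (a - b) + (b - w)| := by ring_nf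
    _ ≤ |(z - a) + (a - b)| + |b - w| := abs_add_le _ _
    _ ≤ |z - a| + |a - b| + |b - w| := by linarith [abs_add_le (z - a) (a - b)]
    _ < δ := by linarith
  · exact ha.1.2 p q ⟨by linarith [hp2], by linarith [hq1]⟩
  · exact hb.1.2 p' q' ⟨by linarith [hp'2], by linarith [hq'1]⟩

lemma fp_nonempty {X : Set ℝ} {E : Set (ℝ × ℝ)} :
    ∀ n (A : Set (Fin n → ℝ)), A ∈ FubiniPow (Coideal X E) n → A.Nonempty := by
  intro n
  induction n with
  | zero => intro A hA; exact absurd hA (notMem_empty _)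
  | succ n ih =>
    cases n with
    | zero =>
      intro A hA
      obtain ⟨x, hx⟩ := coideal_nonempty (hA : {x : ℝ | (fun _ : Fin 1 => x) ∈ A} ∈ Coideal X E)
      exact ⟨_, hx⟩
    | succ m =>
      intro A hA
      obtain ⟨v, hv⟩ := ih _ (hA :
        {v : Fin (m + 1) → ℝ | {y | Fin.snoc v y ∈ A} ∈ Coideal X E} ∈ FubiniPow (Coideal X E) (m + 1))
      obtain ⟨y, hy⟩ := coideal_nonempty hv
      exact ⟨Fin.snoc v y, hy⟩

lemma fp_mono {X : Set ℝ} {E : Set (ℝ × ℝ)} :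
    ∀ n (A B : Set (Fin n → ℝ)), A ∈ FubiniPow (Coideal X E) n → A ⊆ B →
      (∀ x ∈ B, ∀ i, x i ∈ X) → B ∈ FubiniPow (Coideal X E) n := by
  intro n
  induction n with
  | zero => intro A B hA _ _; exact absurd hA (notMem_empty _)
  | succ n ih =>
    cases n with
    | zero =>
      intro A B hA hAB hBX
      have hA' : {x : ℝ | (fun _ : Fin 1 => x) ∈ A} ∈ Coideal X E := hA
      show {x : ℝ | (fun _ : Fin 1 => x) ∈ B} ∈ Coideal X E
      refine ⟨fun x hx => hBX _ hx 0, fun hc => hA'.2 (ctblChrom_mono (fun x hx => hAB hx) hc)⟩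
    | succ m =>
      intro A B hA hAB hBX
      have hA' : {v : Fin (m + 1) → ℝ | {y | Fin.snoc v y ∈ A} ∈ Coideal X E}
          ∈ FubiniPow (Coideal X E) (m + 1) := hA
      show {v : Fin (m + 1) → ℝ | {y | Fin.snoc v y ∈ B} ∈ Coideal X E}
          ∈ FubiniPow (Coideal X E) (m + 1)
      refine ih _ _ hA' ?_ ?_
      · intro v hv
        refine ⟨fun y hy => ?_, fun hc => hv.2 (ctblChrom_mono (fun y hy => hAB hy) hc)⟩
        have := hBX _ hy (Fin.last _)
        rwa [Fin.snoc_last] at this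
      · intro v hv i
        obtain ⟨y, hy⟩ := coideal_nonempty hv
        have := hBX _ hy (Fin.castSucc i)
        rwa [Fin.snoc_castSucc] at this

lemma fp_sigma {X : Set ℝ} {E : Set (ℝ × ℝ)} :
    ∀ n (W : Set (Fin n → ℝ)), W ∈ FubiniPow (Coideal X E) n →
      (∀ x ∈ W, ∀ i, x i ∈ X) →
      ∀ (f : ℕ → Set (Fin n → ℝ)), W ⊆ ⋃ k, f k →
      ∃ k, W ∩ f k ∈ FubiniPow (Coideal X E) n := by
  intro n
  induction n with
  | zero => intro W hW _ _ _; exact absurd hW (notMem_empty _)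
  | succ n ih =>
    cases n with
    | zero =>
      intro W hW _ f hcov
      have hW' : {x : ℝ | (fun _ : Fin 1 => x) ∈ W} ∈ Coideal X E := hW
      obtain ⟨k, hk⟩ := coideal_sigma hW' (fun k => {x : ℝ | (fun _ : Fin 1 => x) ∈ f k}) (by
        intro x hx
        obtain ⟨k, hk⟩ := mem_iUnion.1 (hcov hx)
        exact mem_iUnion.2 ⟨k, hk⟩)
      refine ⟨k, ?_⟩
      show {x : ℝ | (fun _ : Fin 1 => x) ∈ W ∩ f k} ∈ Coideal X E
      exact hk
    | succ m =>
      intro W hW hWX f hcov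
      have hW' : {v : Fin (m + 1) → ℝ | {y | Fin.snoc v y ∈ W} ∈ Coideal X E}
          ∈ FubiniPow (Coideal X E) (m + 1) := hW
      have hBX : ∀ v ∈ {v : Fin (m + 1) → ℝ | {y | Fin.snoc v y ∈ W} ∈ Coideal X E},
          ∀ i, v i ∈ X := by
        intro v hv i
        obtain ⟨y, hy⟩ := coideal_nonempty hv
        have := hWX _ hy (Fin.castSucc i)
        rwa [Fin.snoc_castSucc] at this
      obtain ⟨k, hk⟩ := ih _ hW' hBX
        (fun k => {v : Fin (m + 1) → ℝ | {y | Fin.snoc v y ∈ W ∩ f k} ∈ Coideal X E}) (by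
          intro v hv
          obtain ⟨k, hk⟩ := coideal_sigma (hv : {y | Fin.snoc v y ∈ W} ∈ Coideal X E)
            (fun k => {y | Fin.snoc v y ∈ f k}) (by
              intro y hy
              obtain ⟨k, hk⟩ := mem_iUnion.1 (hcov hy)
              exact mem_iUnion.2 ⟨k, hk⟩)
          refine mem_iUnion.2 ⟨k, ?_⟩
          show {y | Fin.snoc v y ∈ W ∩ f k} ∈ Coideal X E
          have : {y | Fin.snoc v y ∈ W ∩ f k}
              = {y | Fin.snoc v y ∈ W} ∩ {y | Fin.snoc v y ∈ f k} := rfl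
          rw [this]; exact hk)
      refine ⟨k, ?_⟩
      show {v : Fin (m + 1) → ℝ | {y | Fin.snoc v y ∈ W ∩ f k} ∈ Coideal X E}
          ∈ FubiniPow (Coideal X E) (m + 1)
      refine fp_mono _ _ _ hk inter_subset_right ?_
      intro v hv i
      obtain ⟨y, hy⟩ := coideal_nonempty hv
      have := hWX _ hy.1 (Fin.castSucc i)
      rwa [Fin.snoc_castSucc] at this

/-- Key lemma: any member of the `n`-th Fubini power contains two points that are
coordinatewise `E`-related and coordinatewise `δ`-close. -/
lemma key {X : Set ℝ} {E U : Set (ℝ × ℝ)} (hU : IsOpen U) (hEU : E = U ∩ X ×ˢ X) :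
    ∀ n (A : Set (Fin n → ℝ)), A ∈ FubiniPow (Coideal X E) n →
      (∀ x ∈ A, ∀ i, x i ∈ X) → ∀ δ : ℝ, 0 < δ →
      ∃ x ∈ A, ∃ y ∈ A, ∀ i, (x i, y i) ∈ E ∧ |x i - y i| < δ := by
  intro n
  induction n with
  | zero => intro A hA; exact absurd hA (notMem_empty _)
  | succ n ih =>
    cases n with
    | zero =>
      intro A hA hAX δ hδ
      have hA' : {x : ℝ | (fun _ : Fin 1 => x) ∈ A} ∈ Coideal X E := hA
      obtain ⟨p, q, p', q', hsub, hdist, h1, h2⟩ := local_pair hU hEU hA' hδ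
      obtain ⟨a, ha⟩ := coideal_nonempty h1
      obtain ⟨b, hb⟩ := coideal_nonempty h2
      refine ⟨_, ha.1, _, hb.1, fun i => ⟨?_, hdist a ha.2 b hb.2⟩⟩
      rw [hEU]
      exact ⟨hsub ⟨ha.2, hb.2⟩, hA'.1 ha.1, hA'.1 hb.1⟩
    | succ m =>
      intro A hA hAX δ hδ
      classical
      have hB : {v : Fin (m + 1) → ℝ | {y | Fin.snoc v y ∈ A} ∈ Coideal X E}
          ∈ FubiniPow (Coideal X E) (m + 1) := hA
      have hBX : ∀ v ∈ {v : Fin (m + 1) → ℝ | {y | Fin.snoc v y ∈ A} ∈ Coideal X E},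
          ∀ i, v i ∈ X := by
        intro v hv i
        obtain ⟨y, hy⟩ := coideal_nonempty hv
        have := hAX _ hy (Fin.castSucc i)
        rwa [Fin.snoc_castSucc] at this
      set Good : ℚ → ℚ → ℚ → ℚ → Prop := fun p q p' q' =>
        (Ioo (p : ℝ) q ×ˢ Ioo (p' : ℝ) q' ⊆ U)
          ∧ (∀ a ∈ Ioo (p : ℝ) (q : ℝ), ∀ b ∈ Ioo (p' : ℝ) (q' : ℝ), |a - b| < δ) with hGooddef
      set G : ℚ → ℚ → ℚ → ℚ → Set (Fin (m + 1) → ℝ) := fun p q p' q' =>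
        if Good p q p' q' then
          {v | {y | Fin.snoc v y ∈ A} ∩ Ioo (p : ℝ) q ∈ Coideal X E
            ∧ {y | Fin.snoc v y ∈ A} ∩ Ioo (p' : ℝ) q' ∈ Coideal X E}
        else ∅ with hGdef
      obtain ⟨e, he⟩ := exists_surjective_nat (ℚ × ℚ × ℚ × ℚ)
      obtain ⟨k, hk⟩ := fp_sigma _ _ hB hBX
        (fun k => G (e k).1 (e k).2.1 (e k).2.2.1 (e k).2.2.2) (by
          intro v hv
          obtain ⟨p, q, p', q', hsub, hdist, h1, h2⟩ := local_pair hU hEU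
            (hv : {y | Fin.snoc v y ∈ A} ∈ Coideal X E) hδ
          obtain ⟨k, hke⟩ := he (p, q, p', q')
          refine mem_iUnion.2 ⟨k, ?_⟩
          rw [hke, hGdef]
          simp only
          rw [if_pos ⟨hsub, hdist⟩]
          exact ⟨h1, h2⟩)
      set p := (e k).1; set q := (e k).2.1; set p' := (e k).2.2.1; set q' := (e k).2.2.2
      -- The chosen quadruple is Good, since the intersection is nonempty
      obtain ⟨v0, hv0⟩ := fp_nonempty _ _ hk
      have hGood : Good p q p' q' := by
        by_contra hng
        have : G p q p' q' = ∅ := by rw [hGdef]; simp only; rw [if_neg hng]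
        rw [this] at hv0
        exact hv0.2
      have hGset : G p q p' q' =
          {v | {y | Fin.snoc v y ∈ A} ∩ Ioo (p : ℝ) q ∈ Coideal X E
            ∧ {y | Fin.snoc v y ∈ A} ∩ Ioo (p' : ℝ) q' ∈ Coideal X E} := by
        rw [hGdef]; simp only; rw [if_pos hGood]
      -- apply the induction hypothesis
      obtain ⟨v, hv, w, hw, hvw⟩ := ih _ hk (by
        intro v hv i
        exact hBX _ hv.1 i) δ hδ
      rw [hGset] at *
      obtain ⟨a, ha⟩ := coideal_nonempty hv.2.1
      obtain ⟨b, hb⟩ := coideal_nonempty hw.2.2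
      refine ⟨Fin.snoc v a, ha.1, Fin.snoc w b, hb.1, fun i => ?_⟩
      refine Fin.lastCases ?_ ?_ i
      · simp only [Fin.snoc_last]
        refine ⟨?_, hGood.2 a ha.2 b hb.2⟩
        rw [hEU]
        refine ⟨hGood.1 ⟨ha.2, hb.2⟩, ?_, ?_⟩
        · have := hAX _ ha.1 (Fin.last _)
          rwa [Fin.snoc_last] at this
        · have := hAX _ hb.1 (Fin.last _)
          rwa [Fin.snoc_last] at this
      · intro j
        simp only [Fin.snoc_castSucc]
        exact hvw j

/-- Let `(X,E)` be an open graph on `X ⊆ ℝ`, `H` the coideal of non-countably-chromatic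
subsets of `X`, and `n > 0`. If `W ⊆ Xⁿ` and `W ∈ Hⁿ`, then `W \ ∂W ∉ Hⁿ`. -/
theorem diff_bdry_not_mem_fubiniPow
    (X : Set ℝ) (E : Set (ℝ × ℝ))
    (hEsub : E ⊆ X ×ˢ X)
    (hirr : ∀ x : ℝ, (x, x) ∉ E)
    (hsym : ∀ x y : ℝ, (x, y) ∈ E → (y, x) ∈ E)
    (hopen : ∃ U : Set (ℝ × ℝ), IsOpen U ∧ E = U ∩ X ×ˢ X)
    (n : ℕ) (hn : 0 < n)
    (W : Set (Fin n → ℝ)) (hWX : ∀ x ∈ W, ∀ i, x i ∈ X)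
    (hW : W ∈ FubiniPow (Coideal X E) n) :
    W \ Bdry E W ∉ FubiniPow (Coideal X E) n := by
  classical
  obtain ⟨U, hU, hEU⟩ := hopen
  intro hV
  set V := W \ Bdry E W with hVdef
  set Vq : ℚ → Set (Fin n → ℝ) := fun q =>
    if 0 < q then
      {x ∈ V | ¬ ∃ y ∈ W, ∀ i, (x i, y i) ∈ E ∧ |x i - y i| < (q : ℝ)}
    else ∅ with hVqdef
  obtain ⟨e, he⟩ := exists_surjective_nat ℚ
  have hVX : ∀ x ∈ V, ∀ i, x i ∈ X := fun x hx i => hWX x hx.1 i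
  obtain ⟨k, hk⟩ := fp_sigma _ _ hV hVX (fun k => Vq (e k)) (by
    intro x hx
    have hnb : ¬ (x ∈ W ∧ ∀ ε : ℝ, 0 < ε → ∃ y ∈ W, ∀ i, (x i, y i) ∈ E ∧ |x i - y i| < ε) :=
      hx.2
    have hne : ¬ (∀ ε : ℝ, 0 < ε → ∃ y ∈ W, ∀ i, (x i, y i) ∈ E ∧ |x i - y i| < ε) :=
      fun h => hnb ⟨hx.1, h⟩
    rw [not_forall] at hne
    obtain ⟨ε, hε⟩ := hne
    rw [Classical.not_imp] at hε
    obtain ⟨hε0, hno⟩ := hε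
    obtain ⟨r, hr0, hrε⟩ := exists_rat_btwn hε0
    obtain ⟨k, hke⟩ := he r
    refine mem_iUnion.2 ⟨k, ?_⟩
    rw [hVqdef]
    simp only
    rw [hke, if_pos (by exact_mod_cast hr0)]
    refine ⟨hx, fun hQ => hno ?_⟩
    obtain ⟨y, hyW, hy⟩ := hQ
    exact ⟨y, hyW, fun i => ⟨(hy i).1, lt_trans (hy i).2 hrε⟩⟩)
  -- positivity of the chosen rational
  obtain ⟨x0, hx0⟩ := fp_nonempty _ _ hk
  have hq0 : 0 < e k := by
    by_contra h
    have : Vq (e k) = ∅ := by rw [hVqdef]; simp only; rw [if_neg h]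
    rw [this] at hx0
    exact hx0.2
  have hVqset : Vq (e k) =
      {x ∈ V | ¬ ∃ y ∈ W, ∀ i, (x i, y i) ∈ E ∧ |x i - y i| < ((e k : ℚ) : ℝ)} := by
    rw [hVqdef]; simp only; rw [if_pos hq0]
  rw [hVqset] at hk
  obtain ⟨x, hx, y, hy, hxy⟩ := key hU hEU n _ hk
    (fun x hx i => hVX x hx.1 i) ((e k : ℚ) : ℝ) (by exact_mod_cast hq0)
  exact hx.2.2 ⟨y, hy.1.1, hxy⟩

end
end

section
/- Let p ∈ ℙ and suppose {(a_i,b_i) : i < n}, with 0 < n < ω, is a family of distinct pairs such that for each i < n, a_i is the immediate predecessor of b_i in p. Let x_0,…,x_{n−1} be distinct members of ℚ* not belonging to the underlying set of p such that h(a_i) < h(x_i) < h(b_i) for all i < n. Then there exists q ≤ p whose underlying set equals the underlying set of p together with x_0,…,x_{n−1}, and such that a_i <_q x_i <_q b_i for all i < n. -/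
noncomputable section

open Set

/-- The first uncountable ordinal `ω₁`, as a type. -/
def Omega1 : Type 1 := {o : Ordinal // o < (Cardinal.aleph 1).ord}

instance : LinearOrder Omega1 := Subtype.instLinearOrder _

/-- `ℚ* = ω₁ × ℚ`. -/
def QStar : Type 1 := Omega1 × ℚ

/-- The height function `h(α,q) = α` on `ℚ*`. -/
def hQ (x : QStar) : Omega1 := x.1

/-- A condition of Krueger's forcing `ℙ`: a finite tree whose nodes belong to `ℚ*`
(the predecessors of every node are linearly ordered) and such that `x <_p y` implies
`h(x) < h(y)`. -/
structure KCond where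
  carrier : Set QStar
  finite : carrier.Finite
  lt : QStar → QStar → Prop
  mem_left : ∀ x y, lt x y → x ∈ carrier
  mem_right : ∀ x y, lt x y → y ∈ carrier
  lt_trans : ∀ x y z, lt x y → lt y z → lt x z
  pred_linear : ∀ x y z, lt x z → lt y z → lt x y ∨ x = y ∨ lt y x
  ht_mono : ∀ x y, lt x y → hQ x < hQ y

/-- The order on `ℙ`: `q ≤ p` iff the underlying set of `p` is contained in that of `q`
and the orders agree on the nodes of `p`. -/
def KLe (q p : KCond) : Prop :=
  p.carrier ⊆ q.carrier ∧
    ∀ x ∈ p.carrier, ∀ y ∈ p.carrier, (p.lt x y ↔ q.lt x y)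

/-- `a` is the immediate predecessor of `b` in `p`. -/
def ImmPred (p : KCond) (a b : QStar) : Prop :=
  p.lt a b ∧ ¬ ∃ c : QStar, p.lt a c ∧ p.lt c b

/-- The order relation of the extended condition. -/
def ExtLt (p : KCond) {n : ℕ} (a b x : Fin n → QStar) (u v : QStar) : Prop :=
  p.lt u v ∨
  (∃ i, v = x i ∧ (u = a i ∨ p.lt u (a i))) ∨
  (∃ i, u = x i ∧ (v = b i ∨ p.lt (b i) v)) ∨
  (∃ i j, u = x i ∧ v = x j ∧ (b i = a j ∨ p.lt (b i) (a j)))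

/-- Lemma 2.7 of Krueger: given distinct pairs `(a i, b i)` with `a i` an immediate
predecessor of `b i` in `p`, and distinct new nodes `x i` with
`h(a i) < h(x i) < h(b i)`, there is `q ≤ p` whose underlying set is that of `p`
together with the `x i`, such that `a i <_q x i <_q b i` for all `i`. -/
theorem kCond_extension (p : KCond) (n : ℕ) (hn : 0 < n)
    (a b : Fin n → QStar)
    (hdistinct : ∀ i j : Fin n, i ≠ j → (a i, b i) ≠ (a j, b j))
    (himm : ∀ i, ImmPred p (a i) (b i))
    (x : Fin n → QStar) (hxinj : Function.Injective x)
    (hxnew : ∀ i, x i ∉ p.carrier)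
    (hxht : ∀ i, hQ (a i) < hQ (x i) ∧ hQ (x i) < hQ (b i)) :
    ∃ q : KCond, KLe q p ∧ q.carrier = p.carrier ∪ Set.range x ∧
      ∀ i, q.lt (a i) (x i) ∧ q.lt (x i) (b i) := by
  classical
  have hirr : ∀ u, ¬ p.lt u u := fun u h => lt_irrefl _ (p.ht_mono u u h)
  have ha : ∀ i, a i ∈ p.carrier := fun i => p.mem_left _ _ (himm i).1
  have hbmem : ∀ i, b i ∈ p.carrier := fun i => p.mem_right _ _ (himm i).1
  -- any predecessor of `b i` is `a i` or below it
  have hxa : ∀ i u, p.lt u (b i) → u = a i ∨ p.lt u (a i) := by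
    intro i u h
    rcases p.pred_linear u (a i) (b i) h (himm i).1 with h' | h' | h'
    · exact Or.inr h'
    · exact Or.inl h'
    · exact absurd ⟨u, h', h⟩ (himm i).2
  -- the `b i` determine the index
  have hbb : ∀ i j, b i = b j → i = j := by
    intro i j hbe
    by_contra hne
    have h1 : p.lt (a j) (b i) := by rw [hbe]; exact (himm j).1
    have hab : a i = a j := by
      rcases hxa i (a j) h1 with h | h
      · exact h.symm
      · have h2 : p.lt (a i) (b j) := by rw [← hbe]; exact (himm i).1
        exact absurd ⟨a i, h, h2⟩ (himm j).2
    exact hdistinct i j hne (by rw [hab, hbe])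
  set L : QStar → QStar → Prop := ExtLt p a b x with hL
  -- comparability of a new node with an old node, given comparability with `b i`
  have hcmpNO : ∀ (i : Fin n) (u : QStar),
      (p.lt u (b i) ∨ u = b i ∨ p.lt (b i) u) → L u (x i) ∨ L (x i) u := by
    intro i u h
    rcases h with h | h | h
    · exact Or.inl (Or.inr (Or.inl ⟨i, rfl, hxa i u h⟩))
    · exact Or.inr (Or.inr (Or.inr (Or.inl ⟨i, rfl, Or.inl h⟩)))
    · exact Or.inr (Or.inr (Or.inr (Or.inl ⟨i, rfl, Or.inr h⟩)))
  -- comparability of two new nodes, given comparability of `b i`, `b j`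
  have hcmpNN : ∀ (i j : Fin n),
      (p.lt (b i) (b j) ∨ b i = b j ∨ p.lt (b j) (b i)) →
      L (x i) (x j) ∨ x i = x j ∨ L (x j) (x i) := by
    intro i j h
    rcases h with h | h | h
    · exact Or.inl (Or.inr (Or.inr (Or.inr ⟨i, j, rfl, rfl, hxa j (b i) h⟩)))
    · exact Or.inr (Or.inl (by rw [hbb i j h]))
    · exact Or.inr (Or.inr (Or.inr (Or.inr (Or.inr ⟨j, i, rfl, rfl, hxa i (b j) h⟩))))
  -- new nodes are not old nodes
  have hxnea : ∀ i j, x i ≠ a j := fun i j h => hxnew i (h ▸ ha j)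
  have hxneb : ∀ i j, x i ≠ b j := fun i j h => hxnew i (h ▸ hbmem j)
  have hxnlt : ∀ i u, ¬ p.lt (x i) u := fun i u h => hxnew i (p.mem_left _ _ h)
  have hxnlt' : ∀ i u, ¬ p.lt u (x i) := fun i u h => hxnew i (p.mem_right _ _ h)
  -- membership
  have hmem_left : ∀ u v, L u v → u ∈ p.carrier ∪ Set.range x := by
    intro u v h
    rcases h with h | ⟨i, rfl, h⟩ | ⟨i, rfl, h⟩ | ⟨i, j, rfl, rfl, h⟩
    · exact Or.inl (p.mem_left _ _ h)
    · rcases h with h | h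
      · exact Or.inl (h ▸ ha i)
      · exact Or.inl (p.mem_left _ _ h)
    · exact Or.inr ⟨i, rfl⟩
    · exact Or.inr ⟨i, rfl⟩
  have hmem_right : ∀ u v, L u v → v ∈ p.carrier ∪ Set.range x := by
    intro u v h
    rcases h with h | ⟨i, rfl, h⟩ | ⟨i, rfl, h⟩ | ⟨i, j, rfl, rfl, h⟩
    · exact Or.inl (p.mem_right _ _ h)
    · exact Or.inr ⟨i, rfl⟩
    · rcases h with h | h
      · exact Or.inl (h ▸ hbmem i)
      · exact Or.inl (p.mem_right _ _ h)
    · exact Or.inr ⟨j, rfl⟩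
  -- transitivity
  have htrans : ∀ u y z, L u y → L y z → L u z := by
    intro u y z h1 h2
    rcases h1 with h1 | ⟨i, hy, h1⟩ | ⟨i, hu, h1⟩ | ⟨i, k, hu, hy, h1⟩
    · -- u, y old
      rcases h2 with h2 | ⟨j, hz, h2⟩ | ⟨j, hy2, h2⟩ | ⟨j, k, hy2, hz, h2⟩
      · exact Or.inl (p.lt_trans _ _ _ h1 h2)
      · refine Or.inr (Or.inl ⟨j, hz, Or.inr ?_⟩)
        rcases h2 with h2 | h2
        · exact h2 ▸ h1
        · exact p.lt_trans _ _ _ h1 h2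
      · exact absurd (hy2 ▸ h1) (hxnlt' j u)
      · exact absurd (hy2 ▸ h1) (hxnlt' j u)
    · -- y = x i
      subst hy
      rcases h2 with h2 | ⟨j, hz, h2⟩ | ⟨j, hy2, h2⟩ | ⟨j, k, hy2, hz, h2⟩
      · exact absurd h2 (hxnlt i z)
      · rcases h2 with h2 | h2
        · exact absurd h2 (hxnea i j)
        · exact absurd h2 (hxnlt i (a j))
      · -- z ≥ b i (with i = j by injectivity), u ≤ a i : old-old
        have hij : i = j := hxinj hy2
        subst hij
        refine Or.inl ?_
        have hub : p.lt u (b i) := by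
          rcases h1 with h1 | h1
          · exact h1 ▸ (himm i).1
          · exact p.lt_trans _ _ _ h1 (himm i).1
        rcases h2 with h2 | h2
        · exact h2 ▸ hub
        · exact p.lt_trans _ _ _ hub h2
      · -- z = x k, chain u ≤ a i < b i ≤ a k
        have hij : i = j := hxinj hy2
        subst hij
        refine Or.inr (Or.inl ⟨k, hz, Or.inr ?_⟩)
        have hub : p.lt u (b i) := by
          rcases h1 with h1 | h1
          · exact h1 ▸ (himm i).1
          · exact p.lt_trans _ _ _ h1 (himm i).1
        rcases h2 with h2 | h2
        · exact h2 ▸ hub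
        · exact p.lt_trans _ _ _ hub h2
    · -- u = x i, y ≥ b i old
      subst hu
      have hby : p.lt (b i) z → L (x i) z :=
        fun h => Or.inr (Or.inr (Or.inl ⟨i, rfl, Or.inr h⟩))
      rcases h2 with h2 | ⟨j, hz, h2⟩ | ⟨j, hy2, h2⟩ | ⟨j, k, hy2, hz, h2⟩
      · refine Or.inr (Or.inr (Or.inl ⟨i, rfl, Or.inr ?_⟩))
        rcases h1 with h1 | h1
        · exact h1 ▸ h2
        · exact p.lt_trans _ _ _ h1 h2
      · -- z = x j : new-new
        refine Or.inr (Or.inr (Or.inr ⟨i, j, rfl, hz, ?_⟩))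
        rcases h1 with h1 | h1
        · rcases h2 with h2 | h2
          · exact Or.inl (h1.symm.trans h2)
          · exact Or.inr (h1 ▸ h2)
        · rcases h2 with h2 | h2
          · exact Or.inr (h2 ▸ h1)
          · exact Or.inr (p.lt_trans _ _ _ h1 h2)
      · -- y = x j : but y old, contradiction
        exfalso
        rcases h1 with h1 | h1
        · exact hxneb j i (hy2.symm.trans h1)
        · exact hxnlt' j (b i) (hy2 ▸ h1)
      · exfalso
        rcases h1 with h1 | h1
        · exact hxneb j i (hy2.symm.trans h1)
        · exact hxnlt' j (b i) (hy2 ▸ h1)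
    · -- u = x i, y = x k
      subst hu; subst hy
      rcases h2 with h2 | ⟨j, hz, h2⟩ | ⟨j, hy2, h2⟩ | ⟨j, k2, hy2, hz, h2⟩
      · exact absurd h2 (hxnlt k z)
      · rcases h2 with h2 | h2
        · exact absurd h2 (hxnea k j)
        · exact absurd h2 (hxnlt k (a j))
      · -- z ≥ b k old; chain b i ≤ a k < b k ≤ z
        have hkj : k = j := hxinj hy2
        subst hkj
        refine Or.inr (Or.inr (Or.inl ⟨i, rfl, Or.inr ?_⟩))
        have hik : p.lt (b i) (b k) := by
          rcases h1 with h1 | h1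
          · exact h1 ▸ (himm k).1
          · exact p.lt_trans _ _ _ h1 (himm k).1
        rcases h2 with h2 | h2
        · exact h2 ▸ hik
        · exact p.lt_trans _ _ _ hik h2
      · -- z = x k2
        have hkj : k = j := hxinj hy2
        subst hkj
        refine Or.inr (Or.inr (Or.inr ⟨i, k2, rfl, hz, Or.inr ?_⟩))
        have hik : p.lt (b i) (b k) := by
          rcases h1 with h1 | h1
          · exact h1 ▸ (himm k).1
          · exact p.lt_trans _ _ _ h1 (himm k).1
        rcases h2 with h2 | h2
        · exact h2 ▸ hik
        · exact p.lt_trans _ _ _ hik h2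
  -- linearity of predecessors
  have hlin : ∀ u v z, L u z → L v z → L u v ∨ u = v ∨ L v u := by
    intro u v z h1 h2
    rcases h1 with h1 | ⟨k, hz, h1⟩ | ⟨i, hu, h1⟩ | ⟨i, k, hu, hz, h1⟩
    · -- u old, p.lt u z
      rcases h2 with h2 | ⟨k, hz, h2⟩ | ⟨j, hv, h2⟩ | ⟨j, k, hv, hz, h2⟩
      · rcases p.pred_linear u v z h1 h2 with h | h | h
        · exact Or.inl (Or.inl h)
        · exact Or.inr (Or.inl h)
        · exact Or.inr (Or.inr (Or.inl h))
      · exact absurd (hz ▸ h1) (hxnlt' k u)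
      · -- v = x j, z ≥ b j
        subst hv
        have hcmp : p.lt u (b j) ∨ u = b j ∨ p.lt (b j) u := by
          rcases h2 with h2 | h2
          · exact Or.inl (h2 ▸ h1)
          · exact p.pred_linear u (b j) z h1 h2
        rcases hcmpNO j u hcmp with h | h
        · exact Or.inl h
        · exact Or.inr (Or.inr h)
      · exact absurd (hz ▸ h1) (hxnlt' k u)
    · -- z = x k, u ≤ a k
      subst hz
      rcases h2 with h2 | ⟨k2, hz, h2⟩ | ⟨j, hv, h2⟩ | ⟨j, k2, hv, hz, h2⟩
      · exact absurd h2 (hxnlt' k v)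
      · -- v ≤ a k as well (k2 = k)
        have hkk : k = k2 := hxinj hz
        subst hkk
        rcases h1 with h1 | h1
        · rcases h2 with h2 | h2
          · exact Or.inr (Or.inl (h1.trans h2.symm))
          · refine Or.inr (Or.inr (Or.inl ?_)); rw [h1]; exact h2
        · rcases h2 with h2 | h2
          · refine Or.inl (Or.inl ?_); rw [h2]; exact h1
          · rcases p.pred_linear u v (a k) h1 h2 with h | h | h
            · exact Or.inl (Or.inl h)
            · exact Or.inr (Or.inl h)
            · exact Or.inr (Or.inr (Or.inl h))
      · -- v = x j with z = x k old? no: z = x k but third case says z ≥ b j old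
        exfalso
        rcases h2 with h2 | h2
        · exact hxneb k j h2
        · exact hxnlt' k (b j) h2
      · -- v = x j, b j ≤ a k (k2 = k)
        subst hv
        have hkk : k = k2 := hxinj hz
        subst hkk
        have hcmp : p.lt u (b j) ∨ u = b j ∨ p.lt (b j) u := by
          rcases h1 with h1 | h1
          · rcases h2 with h2 | h2
            · exact Or.inr (Or.inl (h1.trans h2.symm))
            · refine Or.inr (Or.inr ?_); rw [h1]; exact h2
          · rcases h2 with h2 | h2
            · refine Or.inl ?_; rw [h2]; exact h1
            · exact p.pred_linear u (b j) (a k) h1 h2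
        rcases hcmpNO j u hcmp with h | h
        · exact Or.inl h
        · exact Or.inr (Or.inr h)
    · -- u = x i, z ≥ b i old
      subst hu
      rcases h2 with h2 | ⟨k, hz, h2⟩ | ⟨j, hv, h2⟩ | ⟨j, k, hv, hz, h2⟩
      · have hcmp : p.lt v (b i) ∨ v = b i ∨ p.lt (b i) v := by
          rcases h1 with h1 | h1
          · exact Or.inl (h1 ▸ h2)
          · exact p.pred_linear v (b i) z h2 h1
        rcases hcmpNO i v hcmp with h | h
        · exact Or.inr (Or.inr h)
        · exact Or.inl h
      · exfalso
        subst hz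
        rcases h1 with h1 | h1
        · exact hxneb k i h1
        · exact hxnlt' k (b i) h1
      · -- v = x j, z ≥ b i and z ≥ b j
        subst hv
        have hcmp : p.lt (b i) (b j) ∨ b i = b j ∨ p.lt (b j) (b i) := by
          rcases h1 with h1 | h1
          · rcases h2 with h2 | h2
            · exact Or.inr (Or.inl (h1.symm.trans h2))
            · exact Or.inr (Or.inr (h1 ▸ h2))
          · rcases h2 with h2 | h2
            · exact Or.inl (h2 ▸ h1)
            · exact p.pred_linear (b i) (b j) z h1 h2
        exact hcmpNN i j hcmp
      · exfalso
        subst hz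
        rcases h1 with h1 | h1
        · exact hxneb k i h1
        · exact hxnlt' k (b i) h1
    · -- u = x i, z = x k, b i ≤ a k
      subst hu; subst hz
      rcases h2 with h2 | ⟨k2, hz, h2⟩ | ⟨j, hv, h2⟩ | ⟨j, k2, hv, hz, h2⟩
      · exact absurd h2 (hxnlt' k v)
      · -- v ≤ a k
        have hkk : k = k2 := hxinj hz
        subst hkk
        have hcmp : p.lt v (b i) ∨ v = b i ∨ p.lt (b i) v := by
          rcases h2 with h2 | h2
          · rcases h1 with h1 | h1
            · exact Or.inr (Or.inl (h2.trans h1.symm))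
            · refine Or.inr (Or.inr ?_); rw [h2]; exact h1
          · rcases h1 with h1 | h1
            · refine Or.inl ?_; rw [h1]; exact h2
            · exact p.pred_linear v (b i) (a k) h2 h1
        rcases hcmpNO i v hcmp with h | h
        · exact Or.inr (Or.inr h)
        · exact Or.inl h
      · exfalso
        rcases h2 with h2 | h2
        · exact hxneb k j h2
        · exact hxnlt' k (b j) h2
      · -- v = x j, b i ≤ a k and b j ≤ a k
        subst hv
        have hkk : k = k2 := hxinj hz
        subst hkk
        have hcmp : p.lt (b i) (b j) ∨ b i = b j ∨ p.lt (b j) (b i) := by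
          rcases h1 with h1 | h1
          · rcases h2 with h2 | h2
            · exact Or.inr (Or.inl (h1.trans h2.symm))
            · refine Or.inr (Or.inr ?_); rw [h1]; exact h2
          · rcases h2 with h2 | h2
            · refine Or.inl ?_; rw [h2]; exact h1
            · exact p.pred_linear (b i) (b j) (a k) h1 h2
        exact hcmpNN i j hcmp
  -- height monotonicity
  have hht : ∀ u v, L u v → hQ u < hQ v := by
    intro u v h
    rcases h with h | ⟨i, rfl, h⟩ | ⟨i, rfl, h⟩ | ⟨i, j, rfl, rfl, h⟩
    · exact p.ht_mono _ _ h
    · rcases h with h | h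
      · exact h ▸ (hxht i).1
      · exact lt_trans (p.ht_mono _ _ h) (hxht i).1
    · rcases h with h | h
      · exact h ▸ (hxht i).2
      · exact lt_trans (hxht i).2 (p.ht_mono _ _ h)
    · rcases h with h | h
      · exact lt_trans (hxht i).2 (h ▸ (hxht j).1)
      · exact lt_trans (hxht i).2 (lt_trans (p.ht_mono _ _ h) (hxht j).1)
  refine ⟨⟨p.carrier ∪ Set.range x, p.finite.union (Set.finite_range x), L,
      hmem_left, hmem_right, htrans, hlin, hht⟩, ⟨Set.subset_union_left, ?_⟩, rfl, ?_⟩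
  · intro u hu v hv
    constructor
    · exact fun h => Or.inl h
    · intro h
      rcases h with h | ⟨i, rfl, h⟩ | ⟨i, rfl, h⟩ | ⟨i, j, rfl, rfl, h⟩
      · exact h
      · exact absurd hv (hxnew i)
      · exact absurd hu (hxnew i)
      · exact absurd hu (hxnew i)
  · intro i
    exact ⟨Or.inr (Or.inl ⟨i, rfl, Or.inl rfl⟩),
      Or.inr (Or.inr (Or.inl ⟨i, rfl, Or.inl rfl⟩))⟩

end
end

section
/- Every uncountable 2-entangled linear order is c.c.c., i.e., every family of pairwise disjoint nonempty open intervals is countable. -/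
noncomputable section

open Set

/-- A linear order is c.c.c. if every family of pairwise disjoint nonempty open
intervals is countable. -/
def CCCOrder (L : Type) [LinearOrder L] : Prop :=
  ∀ F : Set (Set L),
    (∀ s ∈ F, (∃ a b : L, s = Set.Ioo a b) ∧ s.Nonempty) →
    F.Pairwise Disjoint → F.Countable

/-- Every uncountable `2`-entangled linear order is c.c.c. -/
theorem ccc_of_twoEntangled (L : Type) [LinearOrder L] [Uncountable L]
    (h : IsMEntangled L 2) : CCCOrder L := by
  intro F hF hdisj
  by_contra hFc
  obtain ⟨x0⟩ : Nonempty L := inferInstance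
  -- choose endpoints for each interval
  have hex : ∀ s : Set L, ∃ p : L × L, s ∈ F → s = Set.Ioo p.1 p.2 := by
    intro s
    by_cases hs : s ∈ F
    · obtain ⟨a, b, hab⟩ := (hF s hs).1
      exact ⟨(a, b), fun _ => hab⟩
    · exact ⟨(x0, x0), fun h' => absurd h' hs⟩
  choose e he using hex
  set a : Set L → L := fun s => (e s).1 with ha_def
  set b : Set L → L := fun s => (e s).2 with hb_def
  have hab : ∀ s ∈ F, s = Set.Ioo (a s) (b s) := fun s hs => he s hs
  have hne' : ∀ s ∈ F, (Set.Ioo (a s) (b s)).Nonempty := by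
    intro s hs
    rw [← hab s hs]; exact (hF s hs).2
  have hlt : ∀ s ∈ F, a s < b s := by
    intro s hs
    obtain ⟨x, hx⟩ := hne' s hs
    exact lt_trans hx.1 hx.2
  have hdisj' : ∀ s ∈ F, ∀ t ∈ F, s ≠ t → Disjoint s t := fun s hs t ht hst =>
    hdisj hs ht hst
  -- left endpoints are pairwise distinct, similarly right endpoints
  have hainj : ∀ s ∈ F, ∀ t ∈ F, s ≠ t → a s ≠ a t := by
    intro s hs t ht hst heq
    rcases le_total (b s) (b t) with hle | hle
    · obtain ⟨x, hx⟩ := hne' s hs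
      have hxs : x ∈ s := by rw [hab s hs]; exact hx
      have hxt : x ∈ t := by
        rw [hab t ht]; exact ⟨heq ▸ hx.1, lt_of_lt_of_le hx.2 hle⟩
      exact Set.disjoint_left.1 (hdisj' s hs t ht hst) hxs hxt
    · obtain ⟨x, hx⟩ := hne' t ht
      have hxt : x ∈ t := by rw [hab t ht]; exact hx
      have hxs : x ∈ s := by
        rw [hab s hs]; exact ⟨heq ▸ hx.1, lt_of_lt_of_le hx.2 hle⟩
      exact Set.disjoint_left.1 (hdisj' s hs t ht hst) hxs hxt
  have hbinj : ∀ s ∈ F, ∀ t ∈ F, s ≠ t → b s ≠ b t := by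
    intro s hs t ht hst heq
    rcases le_total (a s) (a t) with hle | hle
    · obtain ⟨x, hx⟩ := hne' t ht
      have hxt : x ∈ t := by rw [hab t ht]; exact hx
      have hxs : x ∈ s := by
        rw [hab s hs]; exact ⟨lt_of_le_of_lt hle hx.1, heq ▸ hx.2⟩
      exact Set.disjoint_left.1 (hdisj' s hs t ht hst) hxs hxt
    · obtain ⟨x, hx⟩ := hne' s hs
      have hxs : x ∈ s := by rw [hab s hs]; exact hx
      have hxt : x ∈ t := by
        rw [hab t ht]; exact ⟨lt_of_le_of_lt hle hx.1, heq ▸ hx.2⟩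
      exact Set.disjoint_left.1 (hdisj' s hs t ht hst) hxs hxt
  -- Zorn: a maximal "independent" subfamily (no shared endpoints b s = a t)
  set S : Set (Set (Set L)) :=
    {M | M ⊆ F ∧ ∀ s ∈ M, ∀ t ∈ M, s ≠ t → b s ≠ a t} with hS_def
  obtain ⟨M, hM⟩ : ∃ M, Maximal (· ∈ S) M := by
    apply zorn_subset
    intro c hcS hchain
    refine ⟨⋃₀ c, ⟨?_, ?_⟩, fun s hs => Set.subset_sUnion_of_mem hs⟩
    · exact Set.sUnion_subset fun u hu => (hcS hu).1
    · rintro s ⟨u, hu, hsu⟩ t ⟨v, hv, htv⟩ hst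
      rcases hchain.total hu hv with huv | hvu
      · exact (hcS hv).2 s (huv hsu) t htv hst
      · exact (hcS hu).2 s hsu t (hvu htv) hst
  have hMF : M ⊆ F := hM.prop.1
  have hMind : ∀ s ∈ M, ∀ t ∈ M, s ≠ t → b s ≠ a t := hM.prop.2
  -- by maximality, every member of F is "adjacent" to some member of M
  have hcov : ∀ v ∈ F, v ∉ M → ∃ m ∈ M, b m = a v ∨ b v = a m := by
    intro v hv hvM
    by_contra hno
    push_neg at hno
    have hins : insert v M ∈ S := by
      constructor
      · exact Set.insert_subset hv hMF
      · rintro s (rfl | hs) t (rfl | ht) hst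
        · exact absurd rfl hst
        · exact (hno t ht).2
        · exact fun heq => (hno s hs).1 heq
        · exact hMind s hs t ht hst
    have : insert v M ⊆ M := hM.2 hins (Set.subset_insert v M)
    exact hvM (this (Set.mem_insert v M))
  -- M is uncountable
  have hMc : ¬ M.Countable := by
    intro hMct
    apply hFc
    have hsub : F ⊆ M ∪ ⋃ m ∈ M, ({s | s ∈ F ∧ b m = a s} ∪ {s | s ∈ F ∧ b s = a m}) := by
      intro v hv
      by_cases hvM : v ∈ M
      · exact Or.inl hvM
      · obtain ⟨m, hm, hadj⟩ := hcov v hv hvM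
        refine Or.inr (Set.mem_biUnion hm ?_)
        rcases hadj with h1 | h1
        · exact Or.inl ⟨hv, h1⟩
        · exact Or.inr ⟨hv, h1⟩
    refine Set.Countable.mono hsub (Set.Countable.union hMct ?_)
    refine Set.Countable.biUnion hMct fun m hm => Set.Countable.union ?_ ?_
    · apply Set.Subsingleton.countable
      rintro s ⟨hsF, hs⟩ t ⟨htF, ht⟩
      by_contra hst
      exact hainj s hsF t htF hst (hs ▸ ht ▸ rfl)
    · apply Set.Subsingleton.countable
      rintro s ⟨hsF, hs⟩ t ⟨htF, ht⟩
      by_contra hst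
      exact hbinj s hsF t htF hst (hs.trans ht.symm)
  -- the tuple family
  set T : Set L → (Fin 2 → L) := fun s => ![a s, b s] with hT_def
  have hTinj : Set.InjOn T M := by
    intro s hs t ht heq
    by_contra hst
    have : a s = a t := by
      have := congrFun heq 0
      simpa [hT_def] using this
    exact hainj s (hMF hs) t (hMF ht) hst this
  have hAc : ¬ (T '' M).Countable := by
    intro hc
    exact hMc (Set.countable_of_injective_of_countable_image hTinj hc)
  have hmono : ∀ u ∈ T '' M, StrictMono u := by
    rintro u ⟨s, hs, rfl⟩
    intro i j hij
    fin_cases i <;> fin_cases j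
    · exact absurd hij (lt_irrefl _)
    · exact hlt s (hMF hs)
    · exact absurd hij (by decide)
    · exact absurd hij (lt_irrefl _)
  have hdisjA : ∀ u ∈ T '' M, ∀ v ∈ T '' M, u ≠ v → ∀ i j, u i ≠ v j := by
    rintro u ⟨s, hs, rfl⟩ v ⟨t, ht, rfl⟩ huv i j
    have hst : s ≠ t := fun e => huv (by rw [e])
    have haa : a s ≠ a t := hainj s (hMF hs) t (hMF ht) hst
    have hbb : b s ≠ b t := hbinj s (hMF hs) t (hMF ht) hst
    have hba : b s ≠ a t := hMind s hs t ht hst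
    have hab' : a s ≠ b t := fun e => hMind t ht s hs hst.symm e.symm
    fin_cases i <;> fin_cases j
    · exact haa
    · exact hab'
    · exact hba
    · exact hbb
  obtain ⟨u, hu, v, hv, huv, hty⟩ := h (T '' M) hAc hmono hdisjA ![true, false]
  obtain ⟨s, hs, rfl⟩ := hu
  obtain ⟨t, ht, rfl⟩ := hv
  have hst : s ≠ t := fun e => huv (by rw [e])
  have h0 : a s < a t := by simpa [hT_def] using hty 0
  have h1 : b t < b s := by simpa [hT_def] using hty 1
  obtain ⟨x, hx⟩ := hne' t (hMF ht)
  have hxt : x ∈ t := by rw [hab t (hMF ht)]; exact hx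
  have hxs : x ∈ s := by
    rw [hab s (hMF hs)]
    exact ⟨lt_trans h0 hx.1, lt_trans hx.2 h1⟩
  exact Set.disjoint_left.1 (hdisj' s (hMF hs) t (hMF ht) hst) hxs hxt

end
end

section
/- Every uncountable 3-entangled linear order is topologically separable. -/
noncomputable section

open Set

section Aux

variable {L : Type} [LinearOrder L]

lemma covBy_unique_right' {a b c : L} (h1 : a ⋖ b) (h2 : a ⋖ c) : b = c := by
  rcases lt_trichotomy b c with hl|hl|hl
  · exact absurd hl (h2.2 h1.1)
  · exact hl
  · exact absurd hl (h1.2 h2.1)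

lemma covBy_unique_left' {a b c : L} (h1 : a ⋖ c) (h2 : b ⋖ c) : a = b := by
  rcases lt_trichotomy a b with hl|hl|hl
  · exact absurd h2.1 (h1.2 hl)
  · exact hl
  · exact absurd h1.1 (h2.2 hl)

lemma strictMono_triple' {a b c : L} (h1 : a < b) (h2 : b < c) : StrictMono ![a, b, c] := by
  intro i j hij
  fin_cases i <;> fin_cases j <;> simp_all
  exact h1.trans h2

/-- Extension step for the non-discrete case: given a countable set `D` (containing the
set of points with an immediate successor is dealt with inside), if `L` is not separable
we can find a strictly increasing triple outside `D` whose consecutive gaps avoid `D`. -/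
lemma extension_step (hsep : ¬ TopSeparable L)
    (hP : {x : L | ∃ y, x ⋖ y}.Countable) (D : Set L) (hD : D.Countable) :
    ∃ x : Fin 3 → L, StrictMono x ∧ (∀ i, x i ∉ D) ∧
      (∀ d ∈ D, d ∉ Ioo (x 0) (x 1)) ∧ (∀ d ∈ D, d ∉ Ioo (x 1) (x 2)) := by
  unfold TopSeparable at hsep
  push_neg at hsep
  obtain ⟨a, b, hne, hI⟩ := hsep (D ∪ {x : L | ∃ y, x ⋖ y}) (hD.union hP)
  rw [Set.eq_empty_iff_forall_notMem] at hI
  have havoid : ∀ z ∈ Ioo a b, z ∉ D ∧ ¬ ∃ y, z ⋖ y := by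
    intro z hz
    constructor
    · exact fun hzD => hI z ⟨Or.inl hzD, hz⟩
    · exact fun hzP => hI z ⟨Or.inr hzP, hz⟩
  obtain ⟨x0, hx0⟩ := hne
  have h1 : ∃ z, x0 < z ∧ z < b := by
    have := (havoid x0 hx0).2
    have hnc : ¬ x0 ⋖ b := fun hc => this ⟨b, hc⟩
    exact exists_lt_lt_of_not_covBy hx0.2 hnc
  obtain ⟨x1, hx01, hx1b⟩ := h1
  have hx1 : x1 ∈ Ioo a b := ⟨hx0.1.trans hx01, hx1b⟩
  have h2 : ∃ z, x1 < z ∧ z < b := by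
    have := (havoid x1 hx1).2
    have hnc : ¬ x1 ⋖ b := fun hc => this ⟨b, hc⟩
    exact exists_lt_lt_of_not_covBy hx1b hnc
  obtain ⟨x2, hx12, hx2b⟩ := h2
  have hx2 : x2 ∈ Ioo a b := ⟨hx1.1.trans hx12, hx2b⟩
  refine ⟨![x0, x1, x2], strictMono_triple' hx01 hx12, ?_, ?_, ?_⟩
  · intro i
    fin_cases i
    · exact (havoid x0 hx0).1
    · exact (havoid x1 hx1).1
    · exact (havoid x2 hx2).1
  · intro d hd hdI
    simp only [Matrix.cons_val_zero, Matrix.cons_val_one, Matrix.head_cons] at hdI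
    exact (havoid d ⟨hx0.1.trans hdI.1, hdI.2.trans hx1b⟩).1 hd
  · intro d hd hdI
    simp only [Matrix.cons_val_one, Matrix.head_cons] at hdI
    exact (havoid d ⟨hx1.1.trans hdI.1, hdI.2.trans hx2b⟩).1 hd

lemma strictMono_of_fin3 {f : Fin 3 → L} (h1 : f 0 < f 1) (h2 : f 1 < f 2) :
    StrictMono f := by
  intro i j hij
  fin_cases i <;> fin_cases j <;>
    first
      | exact absurd hij (by decide)
      | exact h1
      | exact h2
      | exact h1.trans h2

lemma case_dense {L : Type} [LinearOrder L] (h : IsMEntangled L 3)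
    (hsep : ¬ TopSeparable L) (hP : {x : L | ∃ y, x ⋖ y}.Countable) : False := by
  set S : Set (Set (Fin 3 → L)) :=
    {A | (∀ a ∈ A, StrictMono a) ∧ (∀ a ∈ A, ∀ b ∈ A, a ≠ b → ∀ i j, a i ≠ b j) ∧
      (∀ a ∈ A, ∀ b ∈ A, a ≠ b →
        (∀ i, a i ∉ Ioo (b 0) (b 1) ∧ a i ∉ Ioo (b 1) (b 2)) ∨
        (∀ i, b i ∉ Ioo (a 0) (a 1) ∧ b i ∉ Ioo (a 1) (a 2)))} with hSdef
  have hchainub : ∀ c ⊆ S, IsChain (· ⊆ ·) c → ∃ ub ∈ S, ∀ s ∈ c, s ⊆ ub := by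
    intro c hcS hchain
    refine ⟨⋃₀ c, ⟨?_, ?_, ?_⟩, fun s hs => subset_sUnion_of_mem hs⟩
    · rintro a ⟨s, hs, has⟩
      exact (hcS hs).1 a has
    · rintro a ⟨s, hs, has⟩ b ⟨t, ht, hbt⟩ hab
      rcases hchain.total hs ht with hst | hts
      · exact (hcS ht).2.1 a (hst has) b hbt hab
      · exact (hcS hs).2.1 a has b (hts hbt) hab
    · rintro a ⟨s, hs, has⟩ b ⟨t, ht, hbt⟩ hab
      rcases hchain.total hs ht with hst | hts
      · exact (hcS ht).2.2 a (hst has) b hbt hab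
      · exact (hcS hs).2.2 a has b (hts hbt) hab
  obtain ⟨A, hAmax⟩ := zorn_subset S hchainub
  have hAS := hAmax.1
  have hAunc : ¬ A.Countable := by
    intro hAc
    have hDc : (⋃ a ∈ A, Set.range a).Countable :=
      hAc.biUnion fun a _ => (Set.finite_range a).countable
    obtain ⟨x, hxmono, hxD, hg1, hg2⟩ := extension_step hsep hP _ hDc
    have hmem : ∀ a ∈ A, ∀ i : Fin 3, a i ∈ ⋃ a ∈ A, Set.range a :=
      fun a ha i => mem_biUnion ha ⟨i, rfl⟩
    have hxA : x ∉ A := fun hx => hxD 0 (hmem x hx 0)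
    have hins : insert x A ∈ S := by
      refine ⟨?_, ?_, ?_⟩
      · rintro a (rfl | ha)
        · exact hxmono
        · exact hAS.1 a ha
      · rintro a (rfl | ha) b (rfl | hb) hab i j
        · exact absurd rfl hab
        · exact fun he => hxD i (he ▸ hmem b hb j)
        · exact fun he => hxD j (he ▸ hmem a ha i)
        · exact hAS.2.1 a ha b hb hab i j
      · rintro a (rfl | ha) b (rfl | hb) hab
        · exact absurd rfl hab
        · exact Or.inr fun i => ⟨fun hi => hg1 _ (hmem b hb i) hi, fun hi => hg2 _ (hmem b hb i) hi⟩
        · exact Or.inl fun i => ⟨fun hi => hg1 _ (hmem a ha i) hi, fun hi => hg2 _ (hmem a ha i) hi⟩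
        · exact hAS.2.2 a ha b hb hab
    exact hxA (hAmax.2 hins (subset_insert x A) (mem_insert x A))
  obtain ⟨a, ha, b, hb, hab, htp⟩ := h A hAunc hAS.1 hAS.2.1 ![true, false, true]
  have h0 : a 0 < b 0 := by simpa using htp 0
  have h1 : b 1 < a 1 := by simpa using htp 1
  have h2 : a 2 < b 2 := by simpa using htp 2
  have hma := hAS.1 a ha
  have hmb := hAS.1 b hb
  rcases hAS.2.2 a ha b hb hab with hc | hc
  · exact (hc 1).2 ⟨h1, lt_trans (hma (show (1:Fin 3) < 2 by decide)) h2⟩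
  · exact (hc 0).1 ⟨h0, lt_trans (hmb (show (0:Fin 3) < 1 by decide)) h1⟩

lemma case_discrete {L : Type} [LinearOrder L] (h : IsMEntangled L 3)
    (hP : ¬ {x : L | ∃ y, x ⋖ y}.Countable) : False := by
  classical
  -- a choice of immediate successor
  obtain ⟨σ, hσ⟩ : ∃ σ : L → L, ∀ x, (∃ y, x ⋖ y) → x ⋖ σ x :=
    ⟨fun x => if hx : ∃ y, x ⋖ y then hx.choose else x,
      fun x hx => by simp only [dif_pos hx]; exact hx.choose_spec⟩
  -- Zorn: a maximal "independent" subset of P (no covering pairs inside)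
  set S : Set (Set L) :=
    {M | M ⊆ {x : L | ∃ y, x ⋖ y} ∧ ∀ x ∈ M, ∀ y ∈ M, x ≠ y → ¬ x ⋖ y} with hSdef
  have hchainub : ∀ c ⊆ S, IsChain (· ⊆ ·) c → ∃ ub ∈ S, ∀ s ∈ c, s ⊆ ub := by
    intro c hcS hchain
    refine ⟨⋃₀ c, ⟨?_, ?_⟩, fun s hs => subset_sUnion_of_mem hs⟩
    · rintro x ⟨s, hs, hxs⟩
      exact (hcS hs).1 hxs
    · rintro x ⟨s, hs, hxs⟩ y ⟨t, ht, hyt⟩ hxy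
      rcases hchain.total hs ht with hst | hts
      · exact (hcS ht).2 x (hst hxs) y hyt hxy
      · exact (hcS hs).2 x hxs y (hts hyt) hxy
  obtain ⟨M, hMmax⟩ := zorn_subset S hchainub
  have hMS := hMmax.1
  -- M is uncountable
  have hMunc : ¬ M.Countable := by
    intro hMc
    have hcases : ∀ z, (∃ y, z ⋖ y) → z ∈ M ∨ (∃ y ∈ M, z ⋖ y) ∨ (∃ x ∈ M, x ⋖ z) := by
      intro z hz
      by_contra hcon
      push_neg at hcon
      obtain ⟨hzM, h1, h2⟩ := hcon
      have hins : insert z M ∈ S := by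
        constructor
        · exact insert_subset hz hMS.1
        · rintro x (rfl | hxM) y (rfl | hyM) hxy hcov
          · exact hxy rfl
          · exact h1 y hyM hcov
          · exact h2 x hxM hcov
          · exact hMS.2 x hxM y hyM hxy hcov
      exact hzM (hMmax.2 hins (subset_insert z M) (mem_insert z M))
    have hsub : {x : L | ∃ y, x ⋖ y} ⊆
        M ∪ ((⋃ y ∈ M, {x | x ⋖ y}) ∪ ⋃ x ∈ M, {z | x ⋖ z}) := by
      intro z hz
      rcases hcases z hz with hz1 | ⟨y, hy, hc⟩ | ⟨x, hx, hc⟩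
      · exact Or.inl hz1
      · exact Or.inr (Or.inl (mem_biUnion hy hc))
      · exact Or.inr (Or.inr (mem_biUnion hx hc))
    refine hP (Set.Countable.mono hsub ?_)
    refine hMc.union (Set.Countable.union ?_ ?_)
    · exact hMc.biUnion fun y _ =>
        Set.Subsingleton.countable fun x hx x' hx' => covBy_unique_left' hx hx'
    · exact hMc.biUnion fun x _ =>
        Set.Subsingleton.countable fun z hz z' hz' => covBy_unique_right' hz hz'
  -- split M into two uncountable halves via an equivalence
  have hinf : Infinite ↥M := Set.infinite_coe_iff.2 fun hfin => hMunc hfin.countable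
  obtain ⟨e⟩ : Nonempty ((↥M ⊕ ↥M) ≃ ↥M) := by
    apply Cardinal.eq.1
    simp [Cardinal.mk_sum, Cardinal.add_eq_self (Cardinal.aleph0_le_mk ↥M)]
  have hcovM : ∀ m : ↥M, (m : L) ⋖ σ m := fun m => hσ m (hMS.1 m.2)
  -- for distinct elements of M, the covering pairs are separated
  have key : ∀ m m' : ↥M, m ≠ m' → (m : L) < m' → σ m < m' := by
    intro m m' hne hlt
    have hσne : σ (m : L) ≠ (m' : L) := by
      intro he
      exact hMS.2 m m.2 m' m'.2 (Subtype.coe_injective.ne hne) (he ▸ hcovM m)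
    rcases lt_trichotomy (σ (m : L)) (m' : L) with hl | hl | hl
    · exact hl
    · exact absurd hl hσne
    · exact absurd hl ((hcovM m).2 hlt)
  -- the family of triples
  set T : ↥M → (Fin 3 → L) := fun s =>
    if (e (Sum.inl s) : L) < (e (Sum.inr s) : L) then
      ![e (Sum.inl s), σ (e (Sum.inl s)), e (Sum.inr s)]
    else ![e (Sum.inr s), σ (e (Sum.inr s)), e (Sum.inl s)] with hTdef
  have hlr : ∀ s : ↥M, e (Sum.inl s) ≠ e (Sum.inr s) :=
    fun s he => Sum.inl_ne_inr (e.injective he)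
  have hT02 : ∀ s : ↥M,
      (T s 0 = e (Sum.inl s) ∧ T s 1 = σ (e (Sum.inl s)) ∧ T s 2 = e (Sum.inr s) ∧
        (e (Sum.inl s) : L) < (e (Sum.inr s) : L)) ∨
      (T s 0 = e (Sum.inr s) ∧ T s 1 = σ (e (Sum.inr s)) ∧ T s 2 = e (Sum.inl s) ∧
        (e (Sum.inr s) : L) < (e (Sum.inl s) : L)) := by
    intro s
    by_cases hlt : (e (Sum.inl s) : L) < (e (Sum.inr s) : L)
    · left
      refine ⟨?_, ?_, ?_, hlt⟩ <;> simp only [hTdef, if_pos hlt] <;> simp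
    · right
      have hne : (e (Sum.inl s) : L) ≠ (e (Sum.inr s) : L) :=
        fun he => hlr s (Subtype.coe_injective he)
      have hlt' : (e (Sum.inr s) : L) < (e (Sum.inl s) : L) := (not_lt.1 hlt).lt_of_ne hne.symm
      refine ⟨?_, ?_, ?_, hlt'⟩ <;> simp only [hTdef, if_neg hlt] <;> simp
  have hTcov : ∀ s : ↥M, T s 0 ⋖ T s 1 := by
    intro s
    rcases hT02 s with ⟨h0, h1, _, _⟩ | ⟨h0, h1, _, _⟩ <;> rw [h0, h1] <;> exact hcovM _
  have hTmono : ∀ s : ↥M, StrictMono (T s) := by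
    intro s
    have h01 : T s 0 < T s 1 := (hTcov s).1
    have h12 : T s 1 < T s 2 := by
      rcases hT02 s with ⟨h0, h1, h2, hlt⟩ | ⟨h0, h1, h2, hlt⟩ <;> rw [h1, h2]
      · exact key _ _ (fun he => hlr s he) hlt
      · exact key _ _ (fun he => hlr s he.symm) hlt
    exact strictMono_of_fin3 h01 h12
  -- each coordinate of `T s` is `m` or `σ m` for one of the two halves
  have hTcoord : ∀ (s : ↥M) (i : Fin 3), ∃ m : ↥M,
      (m = e (Sum.inl s) ∨ m = e (Sum.inr s)) ∧ (T s i = m ∨ T s i = σ m) := by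
    intro s i
    rcases hT02 s with ⟨h0, h1, h2, _⟩ | ⟨h0, h1, h2, _⟩
    · fin_cases i
      · exact ⟨e (Sum.inl s), Or.inl rfl, Or.inl h0⟩
      · exact ⟨e (Sum.inl s), Or.inl rfl, Or.inr h1⟩
      · exact ⟨e (Sum.inr s), Or.inr rfl, Or.inl h2⟩
    · fin_cases i
      · exact ⟨e (Sum.inr s), Or.inr rfl, Or.inl h0⟩
      · exact ⟨e (Sum.inr s), Or.inr rfl, Or.inr h1⟩
      · exact ⟨e (Sum.inl s), Or.inl rfl, Or.inl h2⟩
  -- coordinates of triples from distinct indices are distinct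
  have hTdisj : ∀ s s' : ↥M, s ≠ s' → ∀ i j, T s i ≠ T s' j := by
    intro s s' hss i j he
    obtain ⟨m, hm, hv⟩ := hTcoord s i
    obtain ⟨m', hm', hv'⟩ := hTcoord s' j
    have hmm' : m ≠ m' := by
      rintro rfl
      rcases hm with rfl | rfl <;> rcases hm' with he' | he' <;>
        exact absurd (e.injective he') (by simp [hss, hss.symm, Sum.inl_ne_inr])
    have hmm'L : (m : L) ≠ (m' : L) := Subtype.coe_injective.ne hmm'
    rcases hv with hv | hv <;> rcases hv' with hv' | hv' <;> rw [hv, hv'] at he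
    · exact hmm'L he
    · exact hMS.2 m' m'.2 m m.2 hmm'L.symm (he ▸ hcovM m')
    · exact hMS.2 m m.2 m' m'.2 hmm'L (he ▸ hcovM m)
    · exact hmm' (Subtype.coe_injective (covBy_unique_left' (he ▸ hcovM m) (hcovM m')))
  have hTinj : Function.Injective T := by
    intro s s' he
    by_contra hss
    exact hTdisj s s' hss 0 0 (by rw [he])
  -- apply entangledness
  have hAunc : ¬ (Set.range T).Countable := by
    intro hc
    have : Countable ↥(Set.range T) := hc.to_subtype
    have : Countable ↥M := Function.Injective.countable
      (f := fun s : ↥M => (⟨T s, Set.mem_range_self s⟩ : ↥(Set.range T)))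
      (fun s s' hss => hTinj (congrArg Subtype.val hss))
    exact hMunc (Set.countable_coe_iff.1 this)
  obtain ⟨a, ha, b, hb, hab, htp⟩ := h (Set.range T)
    hAunc (fun a ⟨s, hs⟩ => hs ▸ hTmono s)
    (fun a ⟨s, hs⟩ b ⟨s', hs'⟩ hab i j => by
      rcases hs; rcases hs'
      exact hTdisj s s' (fun he => hab (congrArg T he)) i j)
    ![true, false, true]
  have h0 : a 0 < b 0 := by simpa using htp 0
  have h1 : b 1 < a 1 := by simpa using htp 1
  obtain ⟨s, hs⟩ := ha
  obtain ⟨s', hs'⟩ := hb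
  have hcov : a 0 ⋖ a 1 := hs ▸ hTcov s
  have hb01 : b 0 < b 1 := (hs' ▸ hTmono s') (show (0 : Fin 3) < 1 by decide)
  exact hcov.2 h0 (hb01.trans h1)

end Aux

/-- Every uncountable `3`-entangled linear order is topologically separable. -/
theorem topSeparable_of_threeEntangled (L : Type) [LinearOrder L] [Uncountable L]
    (h : IsMEntangled L 3) : TopSeparable L := by
  by_contra hsep
  by_cases hP : ({x : L | ∃ y, x ⋖ y}).Countable
  · exact case_dense h hsep hP
  · exact case_discrete h hP

end
end

section
/- The linear order ℝ × {0,1} with the lexicographic ordering ((x,i) < (y,j) iff x < y, or x = y and i < j) is topologically separable but not order-theoretically separable. -/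
noncomputable section

open Set

/-- A linear order is order-theoretically separable if there is a countable `D` such
that for all `a < b` there is `d ∈ D` with `a ≤ d ≤ b`. -/
def OrderSeparable (L : Type) [LinearOrder L] : Prop :=
  ∃ D : Set L, D.Countable ∧ ∀ a b : L, a < b → ∃ d ∈ D, a ≤ d ∧ d ≤ b

/-!
A nonempty open interval of `ℝ ×ₗ Bool` has endpoints with distinct first coordinates, so it
contains a point `(q, false)` with `q` rational. On the other hand `(x, false) < (x, true)` are
adjacent, so an order-separating set must contain one of them for every real `x`, and the
projection to the first coordinate maps it onto `ℝ`.
-/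

theorem topSeparable_of_separableSpace (L : Type) [LinearOrder L] [TopologicalSpace L]
    [OrderTopology L] [TopologicalSpace.SeparableSpace L] : TopSeparable L := by
  obtain ⟨D, hD, hdense⟩ := TopologicalSpace.exists_countable_dense L
  exact ⟨D, hD, fun a b hab => inter_comm D _ ▸ hdense.inter_open_nonempty _ isOpen_Ioo hab⟩

namespace Prod.Lex

variable {α : Type*} [PartialOrder α]

theorem fst_lt_fst_of_lt_of_lt {a b c : α ×ₗ Bool} (hac : a < c) (hcb : c < b) :
    (ofLex a).1 < (ofLex b).1 := by
  refine (monotone_fst _ _ (hac.trans hcb).le).lt_of_ne fun hab => ?_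
  have hac₁ : (ofLex a).1 = (ofLex c).1 :=
    (monotone_fst _ _ hac.le).antisymm (hab ▸ monotone_fst _ _ hcb.le)
  have hcb₁ : (ofLex c).1 = (ofLex b).1 := hac₁ ▸ hab
  have no_chain : ∀ x y z : Bool, x < y → y < z → False := by decide
  exact no_chain _ _ _ ((lt_iff'.1 hac).2 hac₁) ((lt_iff'.1 hcb).2 hcb₁)

theorem fst_eq_of_toLex_le_of_le_toLex {β : Type*} [LE β] {x : α} {b₁ b₂ : β}
    {d : α ×ₗ β} (h₁ : toLex (x, b₁) ≤ d) (h₂ : d ≤ toLex (x, b₂)) :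
    (ofLex d).1 = x :=
  (monotone_fst d _ h₂).antisymm (monotone_fst (toLex (x, b₁)) d h₁)

end Prod.Lex

variable {α : Type}

theorem TopSeparable.lex_bool [LinearOrder α] [DenselyOrdered α] (h : TopSeparable α) :
    TopSeparable (α ×ₗ Bool) := by
  obtain ⟨D, hD, hsep⟩ := h
  refine ⟨(fun x => toLex (x, false)) '' D, hD.image _, ?_⟩
  rintro a b ⟨c, hac, hcb⟩
  have hab := Prod.Lex.fst_lt_fst_of_lt_of_lt hac hcb
  obtain ⟨x, hxD, hax, hxb⟩ := hsep _ _ (nonempty_Ioo.2 hab)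
  exact ⟨toLex (x, false), mem_image_of_mem _ hxD,
    Prod.Lex.lt_iff.2 (Or.inl hax), Prod.Lex.lt_iff.2 (Or.inl hxb)⟩

theorem countable_of_orderSeparable_lex_bool [LinearOrder α] (h : OrderSeparable (α ×ₗ Bool)) :
    Countable α := by
  obtain ⟨D, hD, hsep⟩ := h
  have hsurj : univ ⊆ (fun d => (ofLex d).1) '' D := fun x _ => by
    have hx : toLex (x, false) < toLex (x, true) :=
      Prod.Lex.lt_iff.2 (Or.inr ⟨rfl, Bool.false_lt_true⟩)
    obtain ⟨d, hdD, hxd, hdx⟩ := hsep _ _ hx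
    exact ⟨d, hdD, Prod.Lex.fst_eq_of_toLex_le_of_le_toLex hxd hdx⟩
  exact countable_univ_iff.1 ((hD.image _).mono hsurj)

/-- The double arrow: `ℝ × {0,1}` (here `{0,1}` is `Bool` with `false < true`) with the
lexicographic ordering is topologically separable but not order-theoretically
separable. -/
theorem doubleArrow_topSeparable_not_orderSeparable :
    TopSeparable (ℝ ×ₗ Bool) ∧ ¬ OrderSeparable (ℝ ×ₗ Bool) :=
  ⟨(topSeparable_of_separableSpace ℝ).lex_bool,
    fun h => not_countable (countable_of_orderSeparable_lex_bool h)⟩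

end
end
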